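/- arXiv:2505.20153 — 5 statements merged into one kernel-verified Lean document; each statement's English description precedes it below -/
import Mathlib

section
/- For every positive integer n and all real numbers p, q, the following identity holds: ∑_{k=0}^{n} J(k) · C(n,k) · p^k q^{n−k} = ∑_{k=1}^{n} [ (p+q)^n − q^k (p+q)^{n−k} ] / k. -/
open Finset

/-- `J m` is the `m`-th harmonic number `∑_{k=1}^m 1/k`, with `J 0 = 0`. -/
noncomputable def J (m : ℕ) : ℝ := ∑ k ∈ Finset.range m, (1 : ℝ) / (k + 1)

lemma J_zero : J 0 = 0 := by simp [J]

lemma J_succ (m : ℕ) : J (m + 1) = J m + 1 / (m + 1) := by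
  simp [J, Finset.sum_range_succ]

/-- The shifted binomial sum with denominators. -/
lemma binom_frac (n : ℕ) (p q : ℝ) :
    ∑ j ∈ range (n + 1), (n.choose j : ℝ) / (j + 1) * p ^ (j + 1) * q ^ (n - j)
      = ((p + q) ^ (n + 1) - q ^ (n + 1)) / (n + 1) := by
  have h1 : ∀ j : ℕ, (n.choose j : ℝ) / (j + 1)
      = ((n + 1).choose (j + 1) : ℝ) / (n + 1) := by
    intro j
    have h : ((n : ℝ) + 1) * (n.choose j : ℝ)
        = ((n + 1).choose (j + 1) : ℝ) * ((j : ℝ) + 1) := by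
      exact_mod_cast congrArg (Nat.cast : ℕ → ℝ) (Nat.add_one_mul_choose_eq n j)
    have hj : (j : ℝ) + 1 ≠ 0 := by positivity
    have hn : (n : ℝ) + 1 ≠ 0 := by positivity
    field_simp
    linarith [h]
  have key : ∑ j ∈ range (n + 1),
      (p ^ (j + 1) * q ^ ((n + 1) - (j + 1)) * ((n + 1).choose (j + 1) : ℝ))
      = (p + q) ^ (n + 1) - q ^ (n + 1) := by
    have hpow := add_pow p q (n + 1)
    have hsplit := Finset.sum_range_succ'
      (fun k => p ^ k * q ^ ((n + 1) - k) * ((n + 1).choose k : ℝ)) (n + 1)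
    rw [← hpow] at hsplit
    simp only [pow_zero, Nat.sub_zero, Nat.choose_zero_right, Nat.cast_one,
      one_mul, mul_one] at hsplit
    linarith [hsplit]
  calc ∑ j ∈ range (n + 1), (n.choose j : ℝ) / (j + 1) * p ^ (j + 1) * q ^ (n - j)
      = ∑ j ∈ range (n + 1),
          (p ^ (j + 1) * q ^ ((n + 1) - (j + 1)) * ((n + 1).choose (j + 1) : ℝ)) / (n + 1) := by
        refine Finset.sum_congr rfl fun j _ => ?_
        rw [h1, Nat.succ_sub_succ]
        ring
    _ = (∑ j ∈ range (n + 1),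
          (p ^ (j + 1) * q ^ ((n + 1) - (j + 1)) * ((n + 1).choose (j + 1) : ℝ))) / (n + 1) := by
        rw [Finset.sum_div]
    _ = ((p + q) ^ (n + 1) - q ^ (n + 1)) / (n + 1) := by rw [key]

/-- The identity for all `n` (including `n = 0`). -/
lemma key_identity (n : ℕ) (p q : ℝ) :
    ∑ k ∈ Finset.range (n + 1), J k * (n.choose k : ℝ) * p ^ k * q ^ (n - k)
      = ∑ k ∈ Finset.Icc 1 n, ((p + q) ^ n - q ^ k * (p + q) ^ (n - k)) / k := by
  induction n with
  | zero => simp [J_zero]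
  | succ n ih =>
    -- Abbreviations
    set S : ℝ := ∑ k ∈ Finset.range (n + 1), J k * (n.choose k : ℝ) * p ^ k * q ^ (n - k)
      with hS
    -- LHS recursion
    have hLHS : ∑ k ∈ Finset.range (n + 2), J k * ((n + 1).choose k : ℝ) * p ^ k * q ^ ((n + 1) - k)
        = (p + q) * S + ((p + q) ^ (n + 1) - q ^ (n + 1)) / (n + 1) := by
      have hsplit := Finset.sum_range_succ'
        (fun k => J k * ((n + 1).choose k : ℝ) * p ^ k * q ^ ((n + 1) - k)) (n + 1)
      rw [hsplit]
      simp only [J_zero, zero_mul, add_zero]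
      have step : ∀ j ∈ range (n + 1),
          J (j + 1) * ((n + 1).choose (j + 1) : ℝ) * p ^ (j + 1) * q ^ ((n + 1) - (j + 1))
          = p * (J j * (n.choose j : ℝ) * p ^ j * q ^ (n - j))
            + J (j + 1) * (n.choose (j + 1) : ℝ) * p ^ (j + 1) * q ^ (n - j)
            + (n.choose j : ℝ) / (j + 1) * p ^ (j + 1) * q ^ (n - j) := by
        intro j _
        rw [Nat.succ_sub_succ, Nat.choose_succ_succ, J_succ]
        push_cast
        have hj : (j : ℝ) + 1 ≠ 0 := by positivity
        field_simp
        ring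
      rw [Finset.sum_congr rfl step]
      rw [Finset.sum_add_distrib, Finset.sum_add_distrib, binom_frac]
      -- second piece equals q * S
      have hqS : ∑ j ∈ range (n + 1), J (j + 1) * (n.choose (j + 1) : ℝ) * p ^ (j + 1) * q ^ (n - j)
          = q * S := by
        have hsplit2 := Finset.sum_range_succ'
          (fun k => J k * (n.choose k : ℝ) * p ^ k * q ^ (n - k)) n
        have hS2 : S = ∑ i ∈ range n, J (i + 1) * (n.choose (i + 1) : ℝ) * p ^ (i + 1) * q ^ (n - (i + 1)) := by
          rw [hS, hsplit2]; simp [J_zero]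
        rw [hS2, Finset.mul_sum]
        rw [Finset.sum_range_succ]
        simp only [Nat.choose_succ_self, Nat.cast_zero, mul_zero, zero_mul, add_zero]
        refine Finset.sum_congr rfl fun i hi => ?_
        have hi' : i < n := Finset.mem_range.mp hi
        have : n - i = (n - (i + 1)) + 1 := by omega
        rw [this, pow_succ]
        ring
      rw [hqS]
      have hpS : ∑ j ∈ range (n + 1), p * (J j * (n.choose j : ℝ) * p ^ j * q ^ (n - j))
          = p * S := by rw [hS, Finset.mul_sum]
      rw [hpS]
      ring
    -- RHS recursion
    have hRHS : ∑ k ∈ Finset.Icc 1 (n + 1), ((p + q) ^ (n + 1) - q ^ k * (p + q) ^ ((n + 1) - k)) / k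
        = (p + q) * (∑ k ∈ Finset.Icc 1 n, ((p + q) ^ n - q ^ k * (p + q) ^ (n - k)) / k)
          + ((p + q) ^ (n + 1) - q ^ (n + 1)) / (n + 1) := by
      rw [Finset.sum_Icc_succ_top (Nat.one_le_iff_ne_zero.mpr (Nat.succ_ne_zero n))]
      rw [Finset.mul_sum]
      have hterm : ∀ k ∈ Finset.Icc 1 n,
          ((p + q) ^ (n + 1) - q ^ k * (p + q) ^ ((n + 1) - k)) / k
          = (p + q) * (((p + q) ^ n - q ^ k * (p + q) ^ (n - k)) / k) := by
        intro k hk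
        obtain ⟨hk1, hk2⟩ := Finset.mem_Icc.mp hk
        have : (n + 1) - k = (n - k) + 1 := by omega
        rw [this, pow_succ, pow_succ]
        ring
      rw [Finset.sum_congr rfl hterm]
      simp only [Nat.sub_self, pow_zero, mul_one]
      push_cast
      ring
    rw [hLHS, hRHS, ih]

/-- For every positive integer `n` and all real `p, q`,
`∑_{k=0}^n J(k) C(n,k) p^k q^{n−k} = ∑_{k=1}^n [(p+q)^n − q^k (p+q)^{n−k}]/k`. -/
theorem harmonic_binomial_identity (n : ℕ) (hn : 1 ≤ n) (p q : ℝ) :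
    ∑ k ∈ Finset.range (n + 1), J k * (n.choose k : ℝ) * p ^ k * q ^ (n - k)
      = ∑ k ∈ Finset.Icc 1 n, ((p + q) ^ n - q ^ k * (p + q) ^ (n - k)) / k := by
  exact key_identity n p q
end

section
/- For every positive integer n and all real numbers p, q, the following identity holds: ∑_{k=1}^{n} (1/k) · C(n,k) · p^k q^{n−k} = ∑_{k=1}^{n} [ (p+q)^k q^{n−k} − q^n ] / k. -/
open Finset

lemma keyA (n : ℕ) (p q : ℝ) :
    ∑ j ∈ range (n+1), (1/((j:ℝ)+1)) * (n.choose j : ℝ) * p^(j+1) * q^(n-j)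
      = ((p+q)^(n+1) - q^(n+1)) / ((n:ℝ)+1) := by
  have hb : (p+q)^(n+1)
      = (∑ j ∈ range (n+1), p^(j+1) * q^(n-j) * ((n+1).choose (j+1) : ℝ)) + q^(n+1) := by
    rw [add_pow, Finset.sum_range_succ']
    simp [Nat.succ_sub_succ]
  have key : ∀ j ∈ range (n+1), (1/((j:ℝ)+1)) * (n.choose j : ℝ) * p^(j+1) * q^(n-j)
      = (p^(j+1) * q^(n-j) * ((n+1).choose (j+1) : ℝ)) / ((n:ℝ)+1) := by
    intro j _
    have h := Nat.add_one_mul_choose_eq n j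
    have h' : ((n:ℝ)+1) * (n.choose j : ℝ) = ((n+1).choose (j+1) : ℝ) * ((j:ℝ)+1) := by
      exact_mod_cast congrArg (Nat.cast (R := ℝ)) h
    have hj : ((j:ℝ)+1) ≠ 0 := by positivity
    have hn : ((n:ℝ)+1) ≠ 0 := by positivity
    field_simp
    linear_combination p^(j+1) * q^(n-j) * h'
  rw [Finset.sum_congr rfl key, ← Finset.sum_div, hb]
  ring

lemma auxmain (n : ℕ) (p q : ℝ) :
    ∑ j ∈ range n, (1/((j:ℝ)+1)) * (n.choose (j+1) : ℝ) * p^(j+1) * q^(n-(j+1))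
      = ∑ j ∈ range n, ((p+q)^(j+1) * q^(n-(j+1)) - q^n) / ((j:ℝ)+1) := by
  induction n with
  | zero => simp
  | succ n ih =>
    have hsplit : ∀ j ∈ range (n+1),
        (1/((j:ℝ)+1)) * ((n+1).choose (j+1) : ℝ) * p^(j+1) * q^(n+1-(j+1))
        = (1/((j:ℝ)+1)) * (n.choose j : ℝ) * p^(j+1) * q^(n-j)
          + (1/((j:ℝ)+1)) * (n.choose (j+1) : ℝ) * p^(j+1) * q^(n-j) := by
      intro j _
      rw [Nat.succ_sub_succ, Nat.choose_succ_succ]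
      push_cast
      ring
    rw [Finset.sum_congr rfl hsplit, Finset.sum_add_distrib, keyA]
    -- second piece: drop top term (choose n (n+1) = 0), then factor q
    have h2 : ∑ j ∈ range (n+1), (1/((j:ℝ)+1)) * (n.choose (j+1) : ℝ) * p^(j+1) * q^(n-j)
        = q * ∑ j ∈ range n, (1/((j:ℝ)+1)) * (n.choose (j+1) : ℝ) * p^(j+1) * q^(n-(j+1)) := by
      rw [Finset.sum_range_succ, Nat.choose_succ_self]
      rw [Finset.mul_sum]
      simp only [Nat.cast_zero, mul_zero, zero_mul, add_zero]
      apply Finset.sum_congr rfl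
      intro j hj
      have hjn : j < n := Finset.mem_range.mp hj
      have : n - j = (n - (j+1)) + 1 := by omega
      rw [this, pow_succ]
      ring
    rw [h2, ih]
    -- now RHS side
    rw [Finset.sum_range_succ]
    have h3 : ∀ j ∈ range n, ((p+q)^(j+1) * q^(n+1-(j+1)) - q^(n+1)) / ((j:ℝ)+1)
        = q * (((p+q)^(j+1) * q^(n-(j+1)) - q^n) / ((j:ℝ)+1)) := by
      intro j hj
      have hjn : j < n := Finset.mem_range.mp hj
      have : n + 1 - (j+1) = (n - (j+1)) + 1 := by omega
      rw [this, pow_succ, pow_succ]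
      ring
    rw [Finset.sum_congr rfl h3, ← Finset.mul_sum]
    have : n + 1 - (n + 1) = 0 := by omega
    rw [this]
    push_cast
    ring

/-- For every positive integer `n` and all real `p, q`,
`∑_{k=1}^n (1/k) C(n,k) p^k q^{n−k} = ∑_{k=1}^n [(p+q)^k q^{n−k} − q^n]/k`. -/
theorem reciprocal_binomial_identity (n : ℕ) (hn : 1 ≤ n) (p q : ℝ) :
    ∑ k ∈ Finset.Icc 1 n, (1 / (k : ℝ)) * (n.choose k : ℝ) * p ^ k * q ^ (n - k)
      = ∑ k ∈ Finset.Icc 1 n, ((p + q) ^ k * q ^ (n - k) - q ^ n) / k := by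
  have hL : ∑ k ∈ Finset.Icc 1 n, (1 / (k : ℝ)) * (n.choose k : ℝ) * p ^ k * q ^ (n - k)
      = ∑ j ∈ range n, (1/((j:ℝ)+1)) * (n.choose (j+1) : ℝ) * p^(j+1) * q^(n-(j+1)) := by
    rw [← Finset.Ico_add_one_right_eq_Icc, Finset.sum_Ico_eq_sum_range]
    simp only [Nat.add_sub_cancel]
    apply Finset.sum_congr rfl
    intro j _
    rw [add_comm 1 j]
    push_cast
    ring
  have hR : ∑ k ∈ Finset.Icc 1 n, ((p + q) ^ k * q ^ (n - k) - q ^ n) / k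
      = ∑ j ∈ range n, ((p+q)^(j+1) * q^(n-(j+1)) - q^n) / ((j:ℝ)+1) := by
    rw [← Finset.Ico_add_one_right_eq_Icc, Finset.sum_Ico_eq_sum_range]
    simp only [Nat.add_sub_cancel]
    apply Finset.sum_congr rfl
    intro j _
    rw [add_comm 1 j]
    push_cast
    ring
  rw [hL, hR, auxmain]
end

section
/- Let n be a positive integer, p ∈ (0,1], and let M be a Binomial(n, p) random variable. Then E[(J(n) − J(M))²] = ∑_{m=2}^{n} ∑_{k=1}^{m−1} (1−p)^m / (k(m−k)) + ∑_{m=1}^{n} ∑_{k=n−m+1}^{n} (1−p)^m / (mk), and this quantity also equals (log p)² − ∑_{m=n+1}^{∞} ∑_{k=1}^{m−1} (1−p)^m / (k(m−k)) + ∑_{m=1}^{n} ∑_{k=n−m+1}^{n} (1−p)^m / (mk). -/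
open Finset

lemma J_diff {m n : ℕ} (h : m ≤ n) : J n - J m = ∑ k ∈ Ico m n, (1:ℝ)/(k+1) := by
  rw [J, J, eq_comm, eq_sub_iff_add_eq', Finset.sum_range_add_sum_Ico _ h]

lemma alt_pascal (N : ℕ) (f : ℕ → ℝ) :
    ∑ v ∈ range (N+2), (-1:ℝ)^v * ((N+1).choose v) * f v
      = ∑ v ∈ range (N+1), (-1:ℝ)^v * (N.choose v) * f v
        - ∑ v ∈ range (N+1), (-1:ℝ)^v * (N.choose v) * f (v+1) := by
  have e1 : ∑ v ∈ range (N+2), (-1:ℝ)^v * ((N+1).choose v) * f v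
      = (∑ v ∈ range (N+1), -((-1:ℝ)^v * (N.choose v) * f (v+1)))
        + ((∑ v ∈ range (N+1), -((-1:ℝ)^v * (N.choose (v+1)) * f (v+1))) + f 0) := by
    rw [Finset.sum_range_succ' (fun v => (-1:ℝ)^v * ((N+1).choose v) * f v) (N+1)]
    rw [← add_assoc, ← Finset.sum_add_distrib]
    congr 1
    · apply Finset.sum_congr rfl
      intro v _
      rw [Nat.choose_succ_succ]
      push_cast
      ring
    · simp
  have e2 : ∑ v ∈ range (N+1), (-1:ℝ)^v * (N.choose v) * f v
      = (∑ v ∈ range (N+1), -((-1:ℝ)^v * (N.choose (v+1)) * f (v+1))) + f 0 := by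
    rw [Finset.sum_range_succ' (fun v => (-1:ℝ)^v * (N.choose v) * f v) N]
    rw [Finset.sum_range_succ (fun v => -((-1:ℝ)^v * (N.choose (v+1)) * f (v+1))) N]
    simp only [Nat.choose_succ_self, Nat.cast_zero, mul_zero, zero_mul, neg_zero, add_zero]
    congr 1
    · apply Finset.sum_congr rfl
      intro v _
      push_cast
      ring
    · simp
  rw [e1, e2]
  have e3 : ∑ v ∈ range (N+1), -((-1:ℝ)^v * (N.choose v) * f (v+1))
      = -∑ v ∈ range (N+1), (-1:ℝ)^v * (N.choose v) * f (v+1) := by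
    rw [Finset.sum_neg_distrib]
  rw [e3]; ring

lemma prod_pos_aux (N : ℕ) {x : ℝ} (hx : 0 < x) : 0 < ∏ w ∈ range (N+1), (x + w) := by
  apply Finset.prod_pos
  intro w _
  positivity

lemma prod_succ_top (N : ℕ) (x : ℝ) :
    ∏ w ∈ range (N+2), (x + w) = (∏ w ∈ range (N+1), (x + w)) * (x + (N+1)) := by
  rw [Finset.prod_range_succ]
  push_cast
  ring_nf

lemma prod_succ_bot (N : ℕ) (x : ℝ) :
    ∏ w ∈ range (N+2), (x + w) = x * ∏ w ∈ range (N+1), ((x+1) + w) := by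
  rw [Finset.prod_range_succ' (fun w => x + (w:ℝ))]
  rw [Nat.cast_zero, add_zero, mul_comm]
  congr 1
  apply Finset.prod_congr rfl
  intro w _
  push_cast
  ring

lemma alt_inv (N : ℕ) : ∀ x : ℝ, 0 < x →
    ∑ v ∈ range (N+1), (-1:ℝ)^v * (N.choose v) * (1/(x+v))
      = (N.factorial : ℝ) / ∏ w ∈ range (N+1), (x+w) := by
  induction N with
  | zero => intro x hx; simp
  | succ N ih =>
    intro x hx
    rw [show N+1+1 = N+2 from rfl, alt_pascal N (fun v => 1/(x+v))]
    have h2' : ∀ v : ℕ, (1:ℝ)/(x+(v+1:ℕ)) = 1/((x+1)+v) := by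
      intro v; push_cast; ring_nf
    rw [Finset.sum_congr rfl (fun v _ => by rw [h2' v] :
      ∀ v ∈ range (N+1), (-1:ℝ)^v * (N.choose v) * (1/(x+(v+1:ℕ)))
        = (-1:ℝ)^v * (N.choose v) * (1/((x+1)+v)))]
    rw [ih x hx, ih (x+1) (by linarith)]
    have hP1 : (0:ℝ) < ∏ w ∈ range (N+1), (x + w) := prod_pos_aux N hx
    have hP2 : (0:ℝ) < ∏ w ∈ range (N+1), ((x+1) + w) := prod_pos_aux N (by linarith : (0:ℝ) < x+1)
    have hPtop := prod_succ_top N x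
    have hPbot := prod_succ_bot N x
    have hxN : (0:ℝ) < x + (N+1) := by positivity
    rw [hPtop]
    rw [eq_div_iff (by positivity)]
    have : (∏ w ∈ range (N+1), ((x+1) + w)) = (∏ w ∈ range (N+1), (x + w)) * (x + (N+1)) / x := by
      rw [← hPtop, hPbot]; field_simp
    rw [this]
    field_simp
    push_cast [Nat.factorial_succ]
    ring

lemma alt_inv_sq (N : ℕ) : ∀ x : ℝ, 0 < x →
    ∑ v ∈ range (N+1), (-1:ℝ)^v * (N.choose v) * (1/(x+v)^2)
      = ((N.factorial : ℝ) / ∏ w ∈ range (N+1), (x+w)) * ∑ w ∈ range (N+1), 1/(x+w) := by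
  induction N with
  | zero => intro x hx; simp [pow_two]
  | succ N ih =>
    intro x hx
    rw [show N+1+1 = N+2 from rfl, alt_pascal N (fun v => 1/(x+v)^2)]
    have h2' : ∀ v ∈ range (N+1), (-1:ℝ)^v * (N.choose v) * (1/(x+(v+1:ℕ))^2)
        = (-1:ℝ)^v * (N.choose v) * (1/((x+1)+v)^2) := by
      intro v _; push_cast; ring_nf
    rw [Finset.sum_congr rfl h2']
    rw [ih x hx, ih (x+1) (by linarith)]
    have hP1 : (0:ℝ) < ∏ w ∈ range (N+1), (x + w) := prod_pos_aux N hx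
    have hP2 : (0:ℝ) < ∏ w ∈ range (N+1), ((x+1) + w) := prod_pos_aux N (by linarith)
    have hxN : (0:ℝ) < x + (N+1) := by positivity
    have hT1 : ∑ w ∈ range (N+1), 1/(x+w)
        = (∑ w ∈ range (N+2), 1/(x+w)) - 1/(x+(N+1)) := by
      rw [Finset.sum_range_succ (fun w => 1/(x+(w:ℝ))) (N+1)]
      push_cast; ring
    have hT2 : ∑ w ∈ range (N+1), 1/((x+1)+w)
        = (∑ w ∈ range (N+2), 1/(x+w)) - 1/x := by
      rw [Finset.sum_range_succ' (fun w => 1/(x+(w:ℝ))) (N+1)]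
      push_cast
      rw [Finset.sum_congr rfl (fun v _ => by push_cast; ring_nf :
        ∀ v ∈ range (N+1), (1:ℝ)/(x+((v:ℝ)+1)) = 1/((x+1)+v))]
      ring
    have hPb : (∏ w ∈ range (N+1), ((x+1) + w)) = (∏ w ∈ range (N+1), (x + w)) * (x + (N+1)) / x := by
      rw [← prod_succ_top, prod_succ_bot]; field_simp
    rw [hT1, hT2, hPb, prod_succ_top]
    have hne : x ≠ 0 := ne_of_gt hx
    field_simp
    push_cast [Nat.factorial_succ]
    ring

lemma alt_inv_T (N : ℕ) : ∀ x : ℝ, 0 < x →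
    ∑ v ∈ range (N+1), (-1:ℝ)^v * (N.choose v) * ((∑ w ∈ Icc v N, 1/(x+w)) / (x+v))
      = ((N.factorial : ℝ) / ∏ w ∈ range (N+1), (x+w)) * (J N + ∑ w ∈ range (N+1), 1/(x+w)) := by
  induction N with
  | zero => intro x hx; simp [J, pow_two]; field_simp
  | succ N ih =>
    intro x hx
    rw [show N+1+1 = N+2 from rfl,
      alt_pascal N (fun v => (∑ w ∈ Icc v (N+1), 1/(x+w)) / (x+v))]
    -- first sum
    have e1 : ∀ v ∈ range (N+1), (-1:ℝ)^v * (N.choose v) * ((∑ w ∈ Icc v (N+1), 1/(x+w)) / (x+v))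
        = (-1:ℝ)^v * (N.choose v) * ((∑ w ∈ Icc v N, 1/(x+w)) / (x+v))
          + (1/(x+(N+1))) * ((-1:ℝ)^v * (N.choose v) * (1/(x+v))) := by
      intro v hv
      have hv' := mem_range.mp hv
      rw [Finset.sum_Icc_succ_top (by omega : v ≤ N+1) (fun w => 1/(x+(w:ℝ)))]
      push_cast
      ring
    rw [Finset.sum_congr rfl e1, Finset.sum_add_distrib, ← Finset.mul_sum,
      alt_inv N x hx, ih x hx]
    -- second sum
    have e2 : ∀ v ∈ range (N+1),
        (-1:ℝ)^v * (N.choose v) * ((∑ w ∈ Icc (v+1) (N+1), 1/(x+w)) / (x+(v+1:ℕ)))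
        = (-1:ℝ)^v * (N.choose v) * ((∑ w ∈ Icc v N, 1/((x+1)+w)) / ((x+1)+v)) := by
      intro v hv
      have : ∑ w ∈ Icc (v+1) (N+1), (1:ℝ)/(x+w) = ∑ w ∈ Icc v N, 1/((x+1)+w) := by
        rw [show Icc (v+1) (N+1) = (Icc v N).map (addRightEmbedding 1) by
          rw [Finset.map_add_right_Icc]]
        rw [Finset.sum_map]
        apply Finset.sum_congr rfl
        intro w _
        simp [addRightEmbedding]
        push_cast
        ring_nf
      rw [this]
      push_cast
      rw [show x + ((v:ℝ) + 1) = (x+1) + (v:ℝ) by ring]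
    rw [Finset.sum_congr rfl e2, ih (x+1) (by linarith)]
    -- algebra
    have hP1 : (0:ℝ) < ∏ w ∈ range (N+1), (x + w) := prod_pos_aux N hx
    have hP2 : (0:ℝ) < ∏ w ∈ range (N+1), ((x+1) + w) := prod_pos_aux N (by linarith)
    have hxN : (0:ℝ) < x + (N+1) := by positivity
    have hT1 : ∑ w ∈ range (N+1), 1/(x+w)
        = (∑ w ∈ range (N+2), 1/(x+w)) - 1/(x+(N+1)) := by
      rw [Finset.sum_range_succ (fun w => 1/(x+(w:ℝ))) (N+1)]
      push_cast; ring
    have hT2 : ∑ w ∈ range (N+1), 1/((x+1)+w)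
        = (∑ w ∈ range (N+2), 1/(x+w)) - 1/x := by
      rw [Finset.sum_range_succ' (fun w => 1/(x+(w:ℝ))) (N+1)]
      push_cast
      rw [Finset.sum_congr rfl (fun v _ => by push_cast; ring_nf :
        ∀ v ∈ range (N+1), (1:ℝ)/(x+((v:ℝ)+1)) = 1/((x+1)+v))]
      ring
    have hPb : (∏ w ∈ range (N+1), ((x+1) + w)) = (∏ w ∈ range (N+1), (x + w)) * (x + (N+1)) / x := by
      rw [← prod_succ_top, prod_succ_bot]; field_simp
    have hJ : J (N+1) = J N + 1/((N:ℝ)+1) := by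
      rw [J, J, Finset.sum_range_succ]
    have hN1 : ((N:ℝ)+1) ≠ 0 := by positivity
    rw [hT1, hT2, hPb, prod_succ_top, hJ]
    have hne : x ≠ 0 := ne_of_gt hx
    field_simp
    push_cast [Nat.factorial_succ]
    ring

lemma alt_partial (r : ℕ) (hr : 1 ≤ r) (v : ℕ) :
    ∑ i ∈ range (v+1), (-1:ℝ)^i * (r.choose i) = (-1)^v * ((r-1).choose v) := by
  induction v with
  | zero => simp
  | succ v ih =>
    rw [Finset.sum_range_succ, ih]
    have : r.choose (v+1) = (r-1).choose v + (r-1).choose (v+1) := by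
      rw [← Nat.choose_succ_succ]
      congr 1
      omega
    rw [this]
    push_cast
    ring

lemma sq_telescope (x : ℝ) (hx : 0 < x) (r : ℕ) : ∀ d i, i + d = r →
    (∑ w ∈ Ico i r, 1/(x+w))^2
      = ∑ v ∈ Ico i r, (2*(∑ w ∈ Ico v r, 1/(x+w)) - 1/(x+v)) * (1/(x+v)) := by
  intro d
  induction d with
  | zero => intro i hi; rw [show i = r by omega]; simp
  | succ d ih =>
    intro i hi
    have hir : i < r := by omega
    rw [Finset.sum_eq_sum_Ico_succ_bot hir (fun v => (2*(∑ w ∈ Ico v r, 1/(x+w)) - 1/(x+v)) * (1/(x+v)))]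
    rw [← ih (i+1) (by omega)]
    rw [Finset.sum_eq_sum_Ico_succ_bot hir (fun w => 1/(x+(w:ℝ)))]
    ring

lemma fact_prod : ∀ b a : ℕ, a.factorial * ∏ w ∈ range b, (a+1+w) = (a+b).factorial := by
  intro b
  induction b with
  | zero => simp
  | succ b ih =>
    intro a
    rw [Finset.prod_range_succ, ← mul_assoc, ih a,
      show a+(b+1) = (a+b)+1 by omega, Nat.factorial_succ]
    ring

lemma lambda_eq (r : ℕ) (hr : 1 ≤ r) (x : ℝ) (hx : 0 < x) :
    ∑ i ∈ range (r+1), (-1:ℝ)^i * (r.choose i) * (∑ w ∈ Ico i r, 1/(x+w))^2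
      = 2 * (∑ v ∈ range r, (-1:ℝ)^v * ((r-1).choose v) * ((∑ w ∈ Icc v (r-1), 1/(x+w))/(x+v)))
        - ∑ v ∈ range r, (-1:ℝ)^v * ((r-1).choose v) * (1/(x+v)^2) := by
  rw [Finset.sum_range_succ]
  rw [Ico_self, Finset.sum_empty]
  have step2 : ∀ i ∈ range r, (-1:ℝ)^i * (r.choose i) * (∑ w ∈ Ico i r, 1/(x+w))^2
      = ∑ v ∈ Ico i r, (-1:ℝ)^i * (r.choose i) *
          ((2*(∑ w ∈ Ico v r, 1/(x+w)) - 1/(x+v)) * (1/(x+v))) := by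
    intro i hi
    rw [sq_telescope x hx r (r-i) i (by have := mem_range.mp hi; omega), Finset.mul_sum]
  rw [Finset.sum_congr rfl step2]
  rw [range_eq_Ico, sum_Ico_Ico_comm 0 r
    (fun i v => (-1:ℝ)^i * (r.choose i) * ((2*(∑ w ∈ Ico v r, 1/(x+w)) - 1/(x+v)) * (1/(x+v))))]
  have step3 : ∀ v ∈ Ico 0 r,
      ∑ i ∈ Ico 0 (v+1), (-1:ℝ)^i * (r.choose i) *
          ((2*(∑ w ∈ Ico v r, 1/(x+w)) - 1/(x+v)) * (1/(x+v)))
      = 2 * ((-1:ℝ)^v * ((r-1).choose v) * ((∑ w ∈ Icc v (r-1), 1/(x+w))/(x+v)))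
        - (-1:ℝ)^v * ((r-1).choose v) * (1/(x+v)^2) := by
    intro v hv
    rw [← Finset.sum_mul, ← range_eq_Ico, alt_partial r hr v]
    have hIco : Ico v r = Icc v (r-1) := by
      ext a; simp only [Finset.mem_Ico, Finset.mem_Icc]; omega
    rw [hIco]
    have hxv : x + (v:ℝ) ≠ 0 := by positivity
    field_simp
  rw [Finset.sum_congr rfl step3, Finset.sum_sub_distrib, ← Finset.mul_sum, ← range_eq_Ico]
  push_cast
  ring

lemma star (n r : ℕ) (hr : 1 ≤ r) (hrn : r ≤ n) :
    (n.choose r : ℝ) * (∑ i ∈ range (r+1), (-1:ℝ)^i * (r.choose i) * (J n - J (n-r+i))^2)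
      = (∑ k ∈ Icc 1 (r-1), 1/(k * ((r:ℝ) - k)))
        + ∑ k ∈ Icc (n-r+1) n, 1/((r:ℝ) * k) := by
  set x : ℝ := ((n-r : ℕ) : ℝ) + 1 with hxdef
  have hx : 0 < x := by positivity
  -- rewrite J differences
  have e0 : ∀ i ∈ range (r+1), (J n - J (n-r+i))^2 = (∑ w ∈ Ico i r, 1/(x+w))^2 := by
    intro i hi
    have hi' := mem_range.mp hi
    rw [J_diff (by omega : n-r+i ≤ n)]
    congr 1
    rw [Finset.sum_Ico_eq_sum_range, Finset.sum_Ico_eq_sum_range,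
      show n - (n-r+i) = r - i by omega]
    apply Finset.sum_congr rfl
    intro t _
    rw [hxdef]
    have : ((n-r+i+t : ℕ) : ℝ) = ((n-r:ℕ):ℝ) + i + t := by push_cast; ring
    rw [this]
    push_cast
    ring
  rw [Finset.sum_congr rfl (fun i hi => by rw [e0 i hi])]
  rw [lambda_eq r hr x hx]
  have hNr : r - 1 + 1 = r := by omega
  have h2 := alt_inv_sq (r-1) x hx
  have h3 := alt_inv_T (r-1) x hx
  rw [hNr] at h2 h3
  rw [h2, h3]
  -- now the factorial/product computation
  have hPnat : ((n-r).factorial) * ∏ w ∈ range r, ((n-r)+1+w) = n.factorial := by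
    rw [fact_prod r (n-r), show n-r+r = n by omega]
  have hProd : ∏ w ∈ range r, (x+w) = ((∏ w ∈ range r, ((n-r)+1+w) : ℕ) : ℝ) := by
    push_cast
    apply Finset.prod_congr rfl
    intro w _
    rw [hxdef]
  have hchoose : (n.choose r) * r.factorial * (n-r).factorial = n.factorial :=
    Nat.choose_mul_factorial_mul_factorial hrn
  have hrfact : r.factorial = r * (r-1).factorial := by
    rw [show r = (r-1)+1 by omega, Nat.factorial_succ]
    simp [hNr]
  have hkey : (n.choose r : ℝ) * (((r-1).factorial : ℝ) / ∏ w ∈ range r, (x+w)) = 1/r := by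
    rw [hProd]
    have hPpos : 0 < ∏ w ∈ range r, ((n-r)+1+w) := by
      apply Finset.prod_pos; intro w _; omega
    have hnat : (n.choose r) * (r-1).factorial * r = ∏ w ∈ range r, ((n-r)+1+w) := by
      have h5 : ((n-r).factorial) * ((n.choose r) * (r-1).factorial * r)
          = ((n-r).factorial) * (∏ w ∈ range r, ((n-r)+1+w)) := by
        rw [hPnat, ← hchoose, hrfact]; ring
      exact Nat.eq_of_mul_eq_mul_left (Nat.factorial_pos _) h5
    have hPne : ((∏ w ∈ range r, ((n-r)+1+w) : ℕ) : ℝ) ≠ 0 := by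
      exact_mod_cast hPpos.ne'
    have hrne : (r:ℝ) ≠ 0 := Nat.cast_ne_zero.mpr (by omega)
    have h6 : (n.choose r : ℝ) * ((r-1).factorial : ℝ) * r
        = ((∏ w ∈ range r, ((n-r)+1+w) : ℕ) : ℝ) := by
      exact_mod_cast congrArg (Nat.cast : ℕ → ℝ) hnat
    rw [← mul_div_assoc, div_eq_div_iff hPne hrne]
    linear_combination h6
  have hCeq : (n.choose r : ℝ) *
      (2 * ((((r-1).factorial : ℝ) / ∏ w ∈ range r, (x+w)) * (J (r-1) + ∑ w ∈ range r, 1/(x+w)))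
        - (((r-1).factorial : ℝ) / ∏ w ∈ range r, (x+w)) * ∑ w ∈ range r, 1/(x+w))
      = ((n.choose r : ℝ) * (((r-1).factorial : ℝ) / ∏ w ∈ range r, (x+w)))
          * (2 * J (r-1) + ∑ w ∈ range r, 1/(x+w)) := by ring
  rw [hCeq, hkey]
  -- identify T0 with harmonic sums
  have hT0k : ∑ w ∈ range r, 1/(x+w) = ∑ k ∈ Icc (n-r+1) n, (1:ℝ)/k := by
    rw [show Icc (n-r+1) n = Ico (n-r+1) (n+1) by rw [Finset.Ico_add_one_right_eq_Icc],
      Finset.sum_Ico_eq_sum_range, show n+1-(n-r+1) = r by omega]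
    apply Finset.sum_congr rfl
    intro t _
    rw [hxdef]
    have : ((n-r+1+t : ℕ) : ℝ) = ((n-r:ℕ):ℝ) + 1 + t := by push_cast; ring
    rw [this]
  have hsec : ∑ k ∈ Icc (n-r+1) n, 1/((r:ℝ) * k) = (1/r) * ∑ k ∈ Icc (n-r+1) n, (1:ℝ)/k := by
    rw [Finset.mul_sum]
    apply Finset.sum_congr rfl
    intro k _
    rw [one_div, mul_inv, ← one_div, ← one_div]
  have hJrm : ∑ k ∈ Icc 1 (r-1), (1:ℝ)/k = J (r-1) := by
    rw [J, show Icc 1 (r-1) = Ico 1 r by ext a; simp; omega,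
      Finset.sum_Ico_eq_sum_range, show r - 1 = r-1 from rfl]
    apply Finset.sum_congr rfl
    intro t _
    have : ((1+t : ℕ) : ℝ) = (t:ℝ) + 1 := by push_cast; ring
    rw [this]
  have hH2 : ∑ k ∈ Icc 1 (r-1), 1/(k * ((r:ℝ) - k)) = (1/r) * (2 * J (r-1)) := by
    have hsplit : ∀ k ∈ Icc 1 (r-1), (1:ℝ)/(k*((r:ℝ)-k))
        = (1/r)*(1/k) + (1/r)*(1/((r:ℝ)-k)) := by
      intro k hk
      have hk' := mem_Icc.mp hk
      have hk0 : (k:ℝ) ≠ 0 := Nat.cast_ne_zero.mpr (by omega)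
      have hkr : (k:ℝ) < r := by exact_mod_cast (by omega : k < r)
      have hrk : (r:ℝ) - k ≠ 0 := by linarith
      have hrne : (r:ℝ) ≠ 0 := Nat.cast_ne_zero.mpr (by omega)
      field_simp
      ring
    rw [Finset.sum_congr rfl hsplit, Finset.sum_add_distrib, ← Finset.mul_sum, ← Finset.mul_sum]
    have hrefl : ∑ k ∈ Icc 1 (r-1), 1/((r:ℝ)-k) = ∑ k ∈ Icc 1 (r-1), (1:ℝ)/k := by
      apply Finset.sum_nbij' (fun k => r - k) (fun k => r - k)
      · intro a ha; simp at ha ⊢; omega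
      · intro a ha; simp at ha ⊢; omega
      · intro a ha; simp at ha ⊢; omega
      · intro a ha; simp at ha ⊢; omega
      · intro a ha
        have ha' := mem_Icc.mp ha
        have : ((r - a : ℕ) : ℝ) = (r:ℝ) - a := by
          rw [Nat.cast_sub (by omega)]
        rw [this]
    rw [hrefl, hJrm]
    ring
  rw [hT0k, hsec, hH2]
  ring

lemma choose_trinom {n m i : ℕ} (him : i ≤ m) (hmn : m ≤ n) :
    n.choose m * m.choose i = n.choose (n-m+i) * (n-m+i).choose i := by
  have hr : n-m+i ≤ n := by omega
  have h1 := Nat.choose_mul_factorial_mul_factorial hmn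
  have h2 := Nat.choose_mul_factorial_mul_factorial him
  have h3 := Nat.choose_mul_factorial_mul_factorial hr
  have h4 := Nat.choose_mul_factorial_mul_factorial (by omega : i ≤ n-m+i)
  rw [show n-m+i-i = n-m by omega] at h4
  rw [show n-(n-m+i) = m-i by omega] at h3
  have hK : 0 < i.factorial * ((m-i).factorial * (n-m).factorial) := by positivity
  apply Nat.eq_of_mul_eq_mul_right hK
  calc n.choose m * m.choose i * (i.factorial * ((m-i).factorial * (n-m).factorial))
      = (m.choose i * i.factorial * (m-i).factorial) * n.choose m * (n-m).factorial := by ring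
    _ = n.choose m * m.factorial * (n-m).factorial := by rw [h2]; ring
    _ = n.factorial := h1
    _ = n.choose (n-m+i) * (n-m+i).factorial * (m-i).factorial := h3.symm
    _ = ((n-m+i).choose i * i.factorial * (n-m).factorial) * n.choose (n-m+i) * (m-i).factorial := by
        rw [h4]; ring
    _ = n.choose (n-m+i) * (n-m+i).choose i * (i.factorial * ((m-i).factorial * (n-m).factorial)) := by
        ring

lemma expand_binom (n : ℕ) (p : ℝ) :
    ∑ m ∈ range (n+1), (J n - J m)^2 * (n.choose m : ℝ) * p^m * (1-p)^(n-m)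
      = ∑ r ∈ range (n+1), (1-p)^r *
          ((n.choose r : ℝ) * ∑ i ∈ range (r+1), (-1:ℝ)^i * (r.choose i) * (J n - J (n-r+i))^2) := by
  have e1 : ∀ m ∈ range (n+1), (J n - J m)^2 * (n.choose m : ℝ) * p^m * (1-p)^(n-m)
      = ∑ i ∈ range (m+1), (-1:ℝ)^i * (1-p)^(n-m+i) * (n.choose m) * (m.choose i) * (J n - J m)^2 := by
    intro m hm
    have hp : p = -(1-p) + 1 := by ring
    calc (J n - J m)^2 * (n.choose m : ℝ) * p^m * (1-p)^(n-m)
        = (∑ i ∈ range (m+1), (-(1-p))^i * 1^(m-i) * (m.choose i))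
            * ((J n - J m)^2 * (n.choose m) * (1-p)^(n-m)) := by
          rw [← add_pow]; rw [← hp]; ring
      _ = ∑ i ∈ range (m+1), (-1:ℝ)^i * (1-p)^(n-m+i) * (n.choose m) * (m.choose i) * (J n - J m)^2 := by
          rw [Finset.sum_mul]
          apply Finset.sum_congr rfl
          intro i _
          rw [neg_pow, pow_add ((1:ℝ)-p) (n-m) i]
          ring
  rw [Finset.sum_congr rfl e1]
  have e2 : ∀ r ∈ range (n+1), (1-p)^r *
        ((n.choose r : ℝ) * ∑ i ∈ range (r+1), (-1:ℝ)^i * (r.choose i) * (J n - J (n-r+i))^2)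
      = ∑ i ∈ range (r+1), (-1:ℝ)^i * (1-p)^r * (n.choose r) * (r.choose i) * (J n - J (n-r+i))^2 := by
    intro r _
    rw [Finset.mul_sum, Finset.mul_sum]
    apply Finset.sum_congr rfl
    intro i _
    ring
  rw [Finset.sum_congr rfl e2]
  rw [Finset.sum_sigma', Finset.sum_sigma']
  refine Finset.sum_nbij' (fun x => ⟨n - x.1 + x.2, x.2⟩) (fun x => ⟨n - x.1 + x.2, x.2⟩)
    ?_ ?_ ?_ ?_ ?_
  · rintro ⟨m, i⟩ h
    simp only [mem_sigma, mem_range] at h ⊢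
    omega
  · rintro ⟨r, i⟩ h
    simp only [mem_sigma, mem_range] at h ⊢
    omega
  · rintro ⟨m, i⟩ h
    simp only [mem_sigma, mem_range] at h
    simp only
    have : n - (n - m + i) + i = m := by omega
    rw [this]
  · rintro ⟨r, i⟩ h
    simp only [mem_sigma, mem_range] at h
    simp only
    have : n - (n - r + i) + i = r := by omega
    rw [this]
  · rintro ⟨m, i⟩ h
    simp only [mem_sigma, mem_range] at h
    have him : i ≤ m := by omega
    have hmn : m ≤ n := by omega
    simp only
    calc (-1:ℝ)^i * (1-p)^(n-m+i) * (n.choose m) * (m.choose i) * (J n - J m)^2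
        = ((n.choose m * m.choose i : ℕ) : ℝ)
            * ((-1:ℝ)^i * (1-p)^(n-m+i) * (J n - J m)^2) := by push_cast; ring
      _ = ((n.choose (n-m+i) * (n-m+i).choose i : ℕ) : ℝ)
            * ((-1:ℝ)^i * (1-p)^(n-m+i) * (J n - J m)^2) := by rw [choose_trinom him hmn]
      _ = (-1:ℝ)^i * (1-p)^(n-m+i) * (n.choose (n-m+i)) * ((n-m+i).choose i)
            * (J n - J (n-(n-m+i)+i))^2 := by
          rw [show n-(n-m+i)+i = m by omega]; push_cast; ring

lemma log_sq_tsum (p : ℝ) (hp0 : 0 < p) (hp1 : p ≤ 1) :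
    Summable (fun m : ℕ => ∑ k ∈ Icc 1 (m-1), (1-p)^m / (k * ((m:ℝ) - k))) ∧
    (Real.log p)^2 = ∑' m : ℕ, ∑ k ∈ Icc 1 (m-1), (1-p)^m / (k * ((m:ℝ) - k)) := by
  set x : ℝ := 1 - p with hxdef
  have hx0 : 0 ≤ x := by simp [hxdef]; linarith
  have hx1 : |x| < 1 := by rw [abs_of_nonneg hx0]; simp [hxdef]; linarith
  set f : ℕ → ℝ := fun k => x^(k+1)/(k+1) with hfdef
  have hf : HasSum f (-Real.log p) := by
    have := Real.hasSum_pow_div_log_of_abs_lt_one hx1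
    rwa [show 1 - x = p by simp [hxdef]] at this
  have hfnn : ∀ k, 0 ≤ f k := by
    intro k
    apply div_nonneg (pow_nonneg hx0 _) (by positivity)
  have h1 : Summable fun k => ‖f k‖ := by
    have := hf.summable
    simpa [Real.norm_eq_abs, abs_of_nonneg (hfnn _)] using this
  set g : ℕ → ℝ := fun m => ∑ k ∈ Icc 1 (m-1), (1-p)^m / (k * ((m:ℝ) - k)) with hgdef
  have hanti : ∀ m : ℕ, (∑ kl ∈ Finset.HasAntidiagonal.antidiagonal m, f kl.1 * f kl.2) = g (m+2) := by
    intro m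
    rw [Finset.Nat.sum_antidiagonal_eq_sum_range_succ_mk]
    rw [hgdef]
    simp only
    rw [show m+2-1 = m+1 from rfl,
      show Icc 1 (m+1) = Ico 1 (m+2) by rw [show m+2 = (m+1)+1 from rfl, Finset.Ico_add_one_right_eq_Icc],
      Finset.sum_Ico_eq_sum_range, show m+2-1 = m+1 from rfl]
    apply Finset.sum_congr rfl
    intro t ht
    have ht' := mem_range.mp ht
    rw [hfdef]
    simp only
    rw [div_mul_div_comm, ← pow_add, show t+1+(m-t+1) = m+2 by omega]
    congr 1
    have hc : ((m-t:ℕ):ℝ) = (m:ℝ) - t := by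
      rw [Nat.cast_sub (by omega)]
    rw [hc]
    have hc2 : ((1+t:ℕ):ℝ) = 1 + (t:ℝ) := by push_cast; ring
    rw [hc2]
    push_cast
    ring
  have hsumh : Summable (fun m : ℕ => ∑ kl ∈ Finset.HasAntidiagonal.antidiagonal m, f kl.1 * f kl.2) :=
    (summable_norm_sum_mul_antidiagonal_of_summable_norm h1 h1).of_norm
  have hsumg2 : Summable (fun m : ℕ => g (m+2)) := by
    apply hsumh.congr
    intro m
    exact hanti m
  have hsumg : Summable g := (summable_nat_add_iff 2).mp hsumg2
  refine ⟨hsumg, ?_⟩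
  have hmul := tsum_mul_tsum_eq_tsum_sum_antidiagonal_of_summable_norm h1 h1
  rw [hf.tsum_eq] at hmul
  have e1 : (Real.log p)^2 = -Real.log p * -Real.log p := by ring
  rw [e1, hmul]
  rw [tsum_congr hanti]
  have := (Summable.sum_add_tsum_nat_add 2 hsumg).symm
  rw [this]
  have hg0 : ∑ m ∈ range 2, g m = 0 := by
    rw [hgdef, Finset.sum_range_succ, Finset.sum_range_one]
    have : Icc 1 0 = (∅ : Finset ℕ) := by decide
    simp [this]
  rw [hg0, zero_add]
lemma part1 (n : ℕ) (hn : 1 ≤ n) (p : ℝ) :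
    ∑ m ∈ range (n+1), (J n - J m)^2 * (n.choose m : ℝ) * p^m * (1-p)^(n-m)
      = ∑ m ∈ Icc 2 n, ∑ k ∈ Icc 1 (m-1), (1-p)^m / (k * ((m:ℝ) - k))
        + ∑ m ∈ Icc 1 n, ∑ k ∈ Icc (n-m+1) n, (1-p)^m / (m * k) := by
  rw [expand_binom n p]
  rw [← Nat.Ico_zero_eq_range, Finset.sum_eq_sum_Ico_succ_bot (by omega : 0 < n+1)]
  have h00 : (1-p)^(0:ℕ) * ((n.choose 0:ℝ)
      * ∑ i ∈ range (0+1), (-1:ℝ)^i * ((0:ℕ).choose i) * (J n - J (n-0+i))^2) = 0 := by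
    simp
  rw [h00, zero_add, show Ico 1 (n+1) = Icc 1 n by rw [Finset.Ico_add_one_right_eq_Icc]]
  have hstar : ∀ r ∈ Icc 1 n, (1-p)^r * ((n.choose r:ℝ)
        * ∑ i ∈ range (r+1), (-1:ℝ)^i * (r.choose i) * (J n - J (n-r+i))^2)
      = (∑ k ∈ Icc 1 (r-1), (1-p)^r / (k * ((r:ℝ) - k)))
        + ∑ k ∈ Icc (n-r+1) n, (1-p)^r / (r * k) := by
    intro r hr
    have hr' := mem_Icc.mp hr
    rw [star n r hr'.1 hr'.2, mul_add, Finset.mul_sum, Finset.mul_sum]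
    congr 1
    · apply Finset.sum_congr rfl
      intro k _
      rw [mul_one_div]
    · apply Finset.sum_congr rfl
      intro k _
      rw [mul_one_div]
  rw [Finset.sum_congr rfl hstar, Finset.sum_add_distrib]
  congr 1
  rw [show Icc 1 n = Ico 1 (n+1) by rw [Finset.Ico_add_one_right_eq_Icc],
    Finset.sum_eq_sum_Ico_succ_bot (by omega : 1 < n+1)]
  rw [show Icc 1 (1-1) = (∅ : Finset ℕ) from by decide, Finset.sum_empty, zero_add,
    show Ico 2 (n+1) = Icc 2 n by rw [Finset.Ico_add_one_right_eq_Icc]]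

/-- Second moment of the harmonic-transformed binomial count:
for `M ~ Binomial(n,p)` with `n ≥ 1`, `p ∈ (0,1]`,
`E[(J(n)−J(M))²] = ∑_{m=2}^n ∑_{k=1}^{m−1} (1−p)^m/(k(m−k)) + ∑_{m=1}^n ∑_{k=n−m+1}^n (1−p)^m/(mk)`,
which also equals
`(log p)² − ∑_{m=n+1}^∞ ∑_{k=1}^{m−1} (1−p)^m/(k(m−k)) + ∑_{m=1}^n ∑_{k=n−m+1}^n (1−p)^m/(mk)`. -/
theorem harmonic_binomial_second_moment (n : ℕ) (hn : 1 ≤ n) (p : ℝ)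
    (hp0 : 0 < p) (hp1 : p ≤ 1) :
    (∑ m ∈ Finset.range (n + 1),
        (J n - J m) ^ 2 * (n.choose m : ℝ) * p ^ m * (1 - p) ^ (n - m)
      = ∑ m ∈ Finset.Icc 2 n, ∑ k ∈ Finset.Icc 1 (m - 1),
            (1 - p) ^ m / (k * ((m : ℝ) - k))
        + ∑ m ∈ Finset.Icc 1 n, ∑ k ∈ Finset.Icc (n - m + 1) n,
            (1 - p) ^ m / (m * k)) ∧
    (∑ m ∈ Finset.Icc 2 n, ∑ k ∈ Finset.Icc 1 (m - 1),
            (1 - p) ^ m / (k * ((m : ℝ) - k))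
        + ∑ m ∈ Finset.Icc 1 n, ∑ k ∈ Finset.Icc (n - m + 1) n,
            (1 - p) ^ m / (m * k)
      = (Real.log p) ^ 2
        - ∑' j : ℕ, ∑ k ∈ Finset.Icc 1 (n + j),
            (1 - p) ^ (n + 1 + j) / (k * ((n + 1 + j : ℝ) - k))
        + ∑ m ∈ Finset.Icc 1 n, ∑ k ∈ Finset.Icc (n - m + 1) n,
            (1 - p) ^ m / (m * k)) := by
  constructor
  · exact part1 n hn p
  · obtain ⟨hsumg, hlog⟩ := log_sq_tsum p hp0 hp1
    set g : ℕ → ℝ := fun m => ∑ k ∈ Icc 1 (m-1), (1-p)^m / (k * ((m:ℝ) - k)) with hgdef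
    have hsplit : (∑ i ∈ range (n+1), g i) + ∑' i : ℕ, g (i + (n+1)) = ∑' i : ℕ, g i :=
      Summable.sum_add_tsum_nat_add (n+1) hsumg
    have hfin : ∑ i ∈ range (n+1), g i
        = ∑ m ∈ Icc 2 n, ∑ k ∈ Icc 1 (m-1), (1-p)^m / (k * ((m:ℝ) - k)) := by
      rw [← Nat.Ico_zero_eq_range, Finset.sum_eq_sum_Ico_succ_bot (by omega : 0 < n+1),
        Finset.sum_eq_sum_Ico_succ_bot (by omega : 1 < n+1),
        show Ico 2 (n+1) = Icc 2 n by rw [Finset.Ico_add_one_right_eq_Icc]]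
      have hg0 : g 0 = 0 := by
        rw [hgdef]; simp only
        have : Icc 1 (0-1) = (∅ : Finset ℕ) := by decide
        simp [this]
      have hg1 : g 1 = 0 := by
        rw [hgdef]; simp only
        have : Icc 1 (1-1) = (∅ : Finset ℕ) := by decide
        simp [this]
      rw [hg0, hg1, zero_add, zero_add]
    have htail : ∑' i : ℕ, g (i + (n+1))
        = ∑' j : ℕ, ∑ k ∈ Finset.Icc 1 (n + j),
            (1 - p) ^ (n + 1 + j) / (k * ((n + 1 + j : ℝ) - k)) := by
      apply tsum_congr
      intro j
      rw [hgdef]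
      simp only
      rw [show j + (n+1) = n+1+j by omega, show n+1+j-1 = n+j by omega]
      apply Finset.sum_congr rfl
      intro k _
      congr 1
      push_cast
      ring
    have hkey : ∑ m ∈ Icc 2 n, ∑ k ∈ Icc 1 (m-1), (1-p)^m / (k * ((m:ℝ) - k))
        = (Real.log p) ^ 2 - ∑' j : ℕ, ∑ k ∈ Finset.Icc 1 (n + j),
            (1 - p) ^ (n + 1 + j) / (k * ((n + 1 + j : ℝ) - k)) := by
      rw [← htail, ← hfin, hlog, ← hsplit]
      ring
    rw [hkey]
end

section
/- Let p, q ∈ (0,1) with p + q < 1. Then ∑_{m=1}^{∞} ∑_{k=m+1}^{∞} [ (1−p)^m (1 − q/(1−p))^k + (1−q)^m (1 − p/(1−q))^k ] / (mk) = log(p)·log(q) − log(q)·log(1−q) − log(p)·log(1−p) + ∑_{m=1}^{∞} [ 1 − (1−p)^m − (1−q)^m ] / m². (The last series equals ζ(2) − Li₂(1−p) − Li₂(1−q), where Li₂(z) = ∑_{m≥1} z^m/m² is the dilogarithm and ζ(2) = ∑_{m≥1} 1/m².) -/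
open Real Filter Set Finset Topology

noncomputable def li2 (x : ℝ) : ℝ := ∑' n : ℕ, x ^ (n + 1) / ((n : ℝ) + 1) ^ 2

noncomputable def z2 : ℝ := ∑' n : ℕ, 1 / ((n : ℝ) + 1) ^ 2

noncomputable def partlog (n : ℕ) (b : ℝ) : ℝ :=
  ∑ k ∈ Finset.range n, b ^ (k + 1) / ((k : ℝ) + 1)

noncomputable def gg (a b : ℝ) : ℝ :=
  ∑' m : ℕ, a ^ (m + 1) / ((m : ℝ) + 1) * partlog (m + 1) b

lemma summable_inv_sq : Summable (fun n : ℕ => 1 / ((n : ℝ) + 1) ^ 2) := by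
  have h : Summable (fun n : ℕ => 1 / ((n : ℕ) : ℝ) ^ 2) :=
    summable_one_div_nat_pow.2 one_lt_two
  have := (summable_nat_add_iff (f := fun n : ℕ => 1 / ((n : ℕ) : ℝ) ^ 2) 1).2 h
  refine this.congr fun n => ?_
  push_cast
  ring

lemma hasSum_z2 : HasSum (fun n : ℕ => 1 / ((n : ℝ) + 1) ^ 2) z2 :=
  summable_inv_sq.hasSum

lemma summable_li2_terms {x : ℝ} (h : |x| ≤ 1) :
    Summable (fun n : ℕ => x ^ (n + 1) / ((n : ℝ) + 1) ^ 2) := by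
  refine Summable.of_norm_bounded summable_inv_sq fun n => ?_
  have hn : (0:ℝ) < ((n:ℝ)+1)^2 := by positivity
  rw [norm_div, norm_pow, Real.norm_eq_abs, Real.norm_eq_abs]
  rw [abs_of_pos hn]
  gcongr
  exact pow_le_one₀ (abs_nonneg x) h

lemma hasSum_li2 {x : ℝ} (h : |x| ≤ 1) :
    HasSum (fun n : ℕ => x ^ (n + 1) / ((n : ℝ) + 1) ^ 2) (li2 x) :=
  (summable_li2_terms h).hasSum

lemma li2_one : li2 1 = z2 := by
  unfold li2 z2
  exact tsum_congr fun n => by simp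

lemma li2_zero : li2 0 = 0 := by
  unfold li2
  simp

lemma continuousOn_li2 : ContinuousOn li2 (Icc (-1 : ℝ) 1) := by
  unfold li2
  refine continuousOn_tsum (fun n => ?_) summable_inv_sq fun n x hx => ?_
  · exact (continuous_pow _ |>.div_const _).continuousOn
  · have hx1 : |x| ≤ 1 := abs_le.2 ⟨hx.1, hx.2⟩
    have hn : (0:ℝ) < ((n:ℝ)+1)^2 := by positivity
    rw [norm_div, norm_pow, Real.norm_eq_abs, Real.norm_eq_abs, abs_of_pos hn]
    gcongr
    exact pow_le_one₀ (abs_nonneg x) hx1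

lemma hasDerivAt_li2 {x : ℝ} (h0 : x ≠ 0) (h : |x| < 1) :
    HasDerivAt li2 (-Real.log (1 - x) / x) x := by
  set r : ℝ := (|x| + 1) / 2 with hr
  have hxr : |x| < r := by rw [hr]; linarith
  have hr0' : 0 < r := by positivity
  have hr0 : 0 ≤ r := hr0'.le
  have hr1 : r < 1 := by rw [hr]; linarith
  have hx_mem : x ∈ Ioo (-r) r := ⟨(abs_lt.1 hxr).1, (abs_lt.1 hxr).2⟩
  have h0_mem : (0:ℝ) ∈ Ioo (-r) r := ⟨by linarith, hr0'⟩
  have key : HasDerivAt (fun y => ∑' n : ℕ, y ^ (n + 1) / ((n : ℝ) + 1) ^ 2)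
      (∑' n : ℕ, x ^ n / ((n : ℝ) + 1)) x := by
    refine hasDerivAt_tsum_of_isPreconnected (u := fun n : ℕ => r ^ n)
      (summable_geometric_of_lt_one hr0 hr1) isOpen_Ioo
      (convex_Ioo _ _).isPreconnected
      (g := fun (n : ℕ) (y : ℝ) => y ^ (n + 1) / ((n : ℝ) + 1) ^ 2)
      (g' := fun (n : ℕ) (y : ℝ) => y ^ n / ((n : ℝ) + 1))
      (fun n y _ => ?_) (fun n y hy => ?_) h0_mem ?_ hx_mem
    · have hne : ((n : ℝ) + 1) ≠ 0 := by positivity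
      have hd := (hasDerivAt_pow (n + 1) y).div_const (((n : ℝ) + 1) ^ 2)
      refine hd.congr_deriv ?_
      push_cast
      field_simp
    · have hy' : |y| ≤ r := by
        rw [abs_le]; exact ⟨hy.1.le, hy.2.le⟩
      have h1 : (1:ℝ) ≤ |(n : ℝ) + 1| := by
        rw [abs_of_pos (by positivity)]; simp
      rw [Real.norm_eq_abs, abs_div, abs_pow]
      calc |y| ^ n / |(n : ℝ) + 1| ≤ |y| ^ n / 1 := by
              gcongr
        _ = |y| ^ n := by ring
        _ ≤ r ^ n := pow_le_pow_left₀ (abs_nonneg y) hy' n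
    · refine (summable_zero).congr fun n => ?_
      simp
  have heq : (fun n : ℕ => x⁻¹ * (x ^ (n + 1) / ((n : ℝ) + 1)))
      = fun n : ℕ => x ^ n / ((n : ℝ) + 1) := by
    funext n
    rw [pow_succ]
    field_simp
  have hs : HasSum (fun n : ℕ => x ^ n / ((n : ℝ) + 1)) (x⁻¹ * -Real.log (1 - x)) := by
    have h2 := (hasSum_pow_div_log_of_abs_lt_one h).mul_left x⁻¹
    rwa [heq] at h2
  have hfin : HasDerivAt li2 (∑' n : ℕ, x ^ n / ((n : ℝ) + 1)) x := key
  rwa [hs.tsum_eq, inv_mul_eq_div] at hfin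

lemma tendsto_log_mul_log_one_sub :
    Tendsto (fun y : ℝ => Real.log y * Real.log (1 - y)) (𝓝[Ioo (0:ℝ) 1] 0) (𝓝 0) := by
  have hmono : 𝓝[Ioo (0:ℝ) 1] (0:ℝ) ≤ 𝓝[>] (0:ℝ) :=
    nhdsWithin_mono _ Ioo_subset_Ioi_self
  have hA : Tendsto (fun y : ℝ => Real.log y * y) (𝓝[Ioo (0:ℝ) 1] 0) (𝓝 0) := by
    have := tendsto_log_mul_rpow_nhdsGT_zero (r := 1) one_pos
    simp only [Real.rpow_one] at this
    exact this.mono_left hmono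
  have hB : Tendsto (fun y : ℝ => Real.log (1 - y) / y) (𝓝[Ioo (0:ℝ) 1] 0) (𝓝 (-1)) := by
    have hd : HasDerivAt (fun y : ℝ => Real.log (1 - y)) (-1) 0 := by
      have h1 : HasDerivAt (fun y : ℝ => 1 - y) (-1) (0:ℝ) := by
        simpa using (hasDerivAt_id (0:ℝ)).const_sub 1
      have h2 := (Real.hasDerivAt_log (by norm_num : (1:ℝ) - 0 ≠ 0)).comp 0 h1
      simpa [Function.comp_def] using h2
    have hslope := hasDerivAt_iff_tendsto_slope.1 hd
    have hmono2 : 𝓝[Ioo (0:ℝ) 1] (0:ℝ) ≤ 𝓝[≠] (0:ℝ) := by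
      apply nhdsWithin_mono
      intro y hy
      exact ne_of_gt hy.1
    refine (hslope.mono_left hmono2).congr' ?_
    filter_upwards [eventually_mem_nhdsWithin] with y hy
    simp [slope_def_field, div_eq_mul_inv]
  have := hA.mul hB
  rw [zero_mul] at this
  refine this.congr' ?_
  filter_upwards [eventually_mem_nhdsWithin] with y hy
  have hy0 : y ≠ 0 := ne_of_gt hy.1
  field_simp


lemma eq_of_deriv_zero_of_tendsto {f : ℝ → ℝ} {a b c : ℝ} (hab : a < b)
    (hd : ∀ x ∈ Ioo a b, HasDerivAt f 0 x)
    (hl : Tendsto f (𝓝[Ioo a b] b) (𝓝 c)) :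
    ∀ x ∈ Ioo a b, f x = c := by
  intro x hx
  have hconst : ∀ y ∈ Ioo a b, f y = f x := by
    have key : ∀ u v : ℝ, u ∈ Ioo a b → v ∈ Ioo a b → u < v → f v = f u := by
      intro u v hu hv huv
      have hsub : Icc u v ⊆ Ioo a b := fun z hz => ⟨lt_of_lt_of_le hu.1 hz.1, lt_of_le_of_lt hz.2 hv.2⟩
      have hsub2 : Ioo u v ⊆ Ioo a b := fun z hz => hsub ⟨hz.1.le, hz.2.le⟩
      have hcont : ContinuousOn f (Icc u v) := fun z hz =>
        ((hd z (hsub hz)).continuousAt).continuousWithinAt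
      obtain ⟨w, _, hw⟩ := exists_hasDerivAt_eq_slope f (fun _ => 0) huv hcont
        (fun z hz => hd z (hsub2 hz))
      have hvu : v - u ≠ 0 := sub_ne_zero.2 (ne_of_gt huv)
      have : f v - f u = 0 := by
        rcases div_eq_zero_iff.1 hw.symm with h | h
        · exact h
        · exact absurd h hvu
      linarith
    intro y hy
    rcases lt_trichotomy x y with h | h | h
    · exact key x y hx hy h
    · rw [h]
    · exact (key y x hy hx h).symm
  haveI : (𝓝[Ioo a b] b).NeBot := by
    apply mem_closure_iff_nhdsWithin_neBot.1
    rw [closure_Ioo (ne_of_lt hab)]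
    exact ⟨hab.le, le_refl b⟩
  have h2 : Tendsto (fun _ : ℝ => f x) (𝓝[Ioo a b] b) (𝓝 c) := by
    refine hl.congr' ?_
    filter_upwards [eventually_mem_nhdsWithin] with y hy
    exact hconst y hy
  exact (tendsto_nhds_unique tendsto_const_nhds h2)

lemma li2_reflection {x : ℝ} (hx : x ∈ Ioo (0:ℝ) 1) :
    li2 x + li2 (1 - x) + Real.log x * Real.log (1 - x) = z2 := by
  set ψ : ℝ → ℝ := fun y => li2 y + li2 (1 - y) + Real.log y * Real.log (1 - y) with hψ
  have hd : ∀ y ∈ Ioo (0:ℝ) 1, HasDerivAt ψ 0 y := by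
    intro y hy
    have hy0 : y ≠ 0 := ne_of_gt hy.1
    have hy1 : (1:ℝ) - y ≠ 0 := by have := hy.2; intro hcon; linarith [sub_eq_zero.1 hcon]
    have hy1' : (0:ℝ) < 1 - y := by linarith [hy.2]
    have habs : |y| < 1 := abs_lt.2 ⟨by linarith [hy.1], hy.2⟩
    have habs' : |1 - y| < 1 := abs_lt.2 ⟨by linarith [hy.2], by linarith [hy.1]⟩
    have hsub : HasDerivAt (fun z : ℝ => 1 - z) (-1) y := by
      simpa using (hasDerivAt_id y).const_sub 1
    have h1 : HasDerivAt li2 (-Real.log (1 - y) / y) y := hasDerivAt_li2 hy0 habs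
    have h2 : HasDerivAt (fun z => li2 (1 - z)) (-Real.log y / (1 - y) * (-1)) y := by
      have := (hasDerivAt_li2 hy1 habs').comp y hsub
      simpa [Function.comp_def] using this
    have h3 : HasDerivAt (fun z : ℝ => Real.log z * Real.log (1 - z))
        (y⁻¹ * Real.log (1 - y) + Real.log y * ((1 - y)⁻¹ * (-1))) y := by
      have hlog1 : HasDerivAt Real.log y⁻¹ y := Real.hasDerivAt_log hy0
      have hlog2 : HasDerivAt (fun z : ℝ => Real.log (1 - z)) ((1 - y)⁻¹ * (-1)) y := by
        have := (Real.hasDerivAt_log hy1).comp y hsub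
        simpa [Function.comp_def] using this
      exact hlog1.mul hlog2
    have htot := (h1.add h2).add h3
    refine htot.congr_deriv ?_
    field_simp
    ring
  have hl : Tendsto ψ (𝓝[Ioo (0:ℝ) 1] 1) (𝓝 z2) := by
    have hmap : Tendsto (fun y : ℝ => 1 - y) (𝓝[Ioo (0:ℝ) 1] 1) (𝓝[Ioo (0:ℝ) 1] 0) := by
      apply tendsto_nhdsWithin_of_tendsto_nhds_of_eventually_within
      · have : Tendsto (fun y : ℝ => 1 - y) (𝓝 (1:ℝ)) (𝓝 0) := by
          simpa using (continuous_sub_left (1:ℝ)).tendsto 1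
        exact this.mono_left nhdsWithin_le_nhds
      · filter_upwards [eventually_mem_nhdsWithin] with y hy
        exact ⟨by linarith [hy.2], by linarith [hy.1]⟩
    have hIccmono : 𝓝[Ioo (0:ℝ) 1] (1:ℝ) ≤ 𝓝[Icc (-1:ℝ) 1] 1 := by
      apply nhdsWithin_mono
      intro y hy
      exact ⟨by linarith [hy.1], hy.2.le⟩
    have hIccmono0 : 𝓝[Ioo (0:ℝ) 1] (0:ℝ) ≤ 𝓝[Icc (-1:ℝ) 1] 0 := by
      apply nhdsWithin_mono
      intro y hy
      exact ⟨by linarith [hy.1], hy.2.le⟩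
    have t1 : Tendsto li2 (𝓝[Ioo (0:ℝ) 1] 1) (𝓝 z2) := by
      have := (continuousOn_li2 1 (by constructor <;> norm_num)).mono_left hIccmono
      rwa [li2_one] at this
    have t2 : Tendsto (fun y => li2 (1 - y)) (𝓝[Ioo (0:ℝ) 1] 1) (𝓝 0) := by
      have hc : Tendsto li2 (𝓝[Ioo (0:ℝ) 1] 0) (𝓝 0) := by
        have := (continuousOn_li2 0 (by constructor <;> norm_num)).mono_left hIccmono0
        rwa [li2_zero] at this
      exact hc.comp hmap
    have t3 : Tendsto (fun y : ℝ => Real.log y * Real.log (1 - y)) (𝓝[Ioo (0:ℝ) 1] 1) (𝓝 0) := by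
      have hcomp := tendsto_log_mul_log_one_sub.comp hmap
      refine hcomp.congr' ?_
      filter_upwards [eventually_mem_nhdsWithin] with y hy
      simp only [Function.comp]
      rw [show (1:ℝ) - (1 - y) = y by ring]
      ring
    have := (t1.add t2).add t3
    simpa using this
  exact eq_of_deriv_zero_of_tendsto one_pos hd hl x hx

lemma partlog_nonneg {b : ℝ} (hb : 0 ≤ b) (n : ℕ) : 0 ≤ partlog n b := by
  unfold partlog
  apply Finset.sum_nonneg
  intro k _
  positivity

lemma partlog_le {b : ℝ} (hb0 : 0 ≤ b) (hb1 : b ≤ 1) (n : ℕ) :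
    partlog n b ≤ (n : ℝ) * b := by
  unfold partlog
  calc ∑ k ∈ Finset.range n, b ^ (k + 1) / ((k : ℝ) + 1)
      ≤ ∑ k ∈ Finset.range n, b := by
        apply Finset.sum_le_sum
        intro k _
        have h1 : b ^ (k + 1) ≤ b := by
          calc b ^ (k + 1) ≤ b ^ 1 := pow_le_pow_of_le_one hb0 hb1 (by omega)
            _ = b := pow_one b
        have h2 : (1:ℝ) ≤ (k : ℝ) + 1 := by simp
        calc b ^ (k + 1) / ((k : ℝ) + 1) ≤ b ^ (k + 1) / 1 := by
              gcongr
          _ = b ^ (k + 1) := div_one _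
          _ ≤ b := h1
    _ = (n : ℝ) * b := by rw [Finset.sum_const, Finset.card_range, nsmul_eq_mul]

lemma partlog_succ (n : ℕ) (b : ℝ) :
    partlog (n + 1) b = partlog n b + b ^ (n + 1) / ((n : ℝ) + 1) := by
  unfold partlog
  rw [Finset.sum_range_succ]

lemma summable_succ_mul_geom {a : ℝ} (ha0 : 0 ≤ a) (ha1 : a < 1) :
    Summable (fun n : ℕ => ((n : ℝ) + 1) * a ^ n) := by
  have h1 : Summable (fun n : ℕ => ((n : ℝ)) * a ^ n) := by
    have := summable_pow_mul_geometric_of_norm_lt_one 1 (r := a)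
      (by rwa [Real.norm_eq_abs, abs_of_nonneg ha0])
    simpa using this
  have h2 : Summable (fun n : ℕ => a ^ n) := summable_geometric_of_lt_one ha0 ha1
  refine (h1.add h2).congr fun n => ?_
  ring

lemma summable_S1 {a b : ℝ} (ha0 : 0 ≤ a) (ha1 : a < 1) (hb0 : 0 ≤ b) (hb1 : b ≤ 1) :
    Summable (fun m : ℕ => a ^ m * partlog (m + 1) b) := by
  refine Summable.of_nonneg_of_le (fun m => ?_) (fun m => ?_)
    (summable_succ_mul_geom ha0 ha1)
  · exact mul_nonneg (pow_nonneg ha0 _) (partlog_nonneg hb0 _)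
  · calc a ^ m * partlog (m + 1) b ≤ a ^ m * (((m : ℝ) + 1) * b) := by
          have := partlog_le hb0 hb1 (m + 1)
          push_cast at this
          exact mul_le_mul_of_nonneg_left this (pow_nonneg ha0 _)
      _ ≤ a ^ m * (((m : ℝ) + 1) * 1) := by
          gcongr
      _ = ((m : ℝ) + 1) * a ^ m := by ring

lemma summable_S0 {a b : ℝ} (ha0 : 0 ≤ a) (ha1 : a < 1) (hb0 : 0 ≤ b) (hb1 : b ≤ 1) :
    Summable (fun m : ℕ => a ^ m * partlog m b) := by
  refine Summable.of_nonneg_of_le (fun m => ?_) (fun m => ?_)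
    (summable_succ_mul_geom ha0 ha1)
  · exact mul_nonneg (pow_nonneg ha0 _) (partlog_nonneg hb0 _)
  · calc a ^ m * partlog m b ≤ a ^ m * ((m : ℝ) * b) :=
          mul_le_mul_of_nonneg_left (partlog_le hb0 hb1 m) (pow_nonneg ha0 _)
      _ ≤ ((m : ℝ) + 1) * a ^ m := by
          have hm : (m : ℝ) * b ≤ (m : ℝ) + 1 := by
            nlinarith [Nat.cast_nonneg (α := ℝ) m]
          nlinarith [pow_nonneg ha0 m, pow_le_one₀ ha0 ha1.le (n := m)]

lemma gg_term_nonneg {a b : ℝ} (ha0 : 0 ≤ a) (hb0 : 0 ≤ b) (m : ℕ) :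
    0 ≤ a ^ (m + 1) / ((m : ℝ) + 1) * partlog (m + 1) b := by
  have h1 : (0:ℝ) < (m : ℝ) + 1 := by positivity
  exact mul_nonneg (div_nonneg (pow_nonneg ha0 _) h1.le) (partlog_nonneg hb0 _)

lemma gg_term_le {a b : ℝ} (ha0 : 0 ≤ a) (ha1 : a < 1) (hb0 : 0 ≤ b) (hb1 : b ≤ 1) (m : ℕ) :
    a ^ (m + 1) / ((m : ℝ) + 1) * partlog (m + 1) b ≤ a ^ m * b := by
  have h1 : (0:ℝ) < (m : ℝ) + 1 := by positivity
  calc a ^ (m + 1) / ((m : ℝ) + 1) * partlog (m + 1) b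
      ≤ a ^ (m + 1) / ((m : ℝ) + 1) * (((m : ℝ) + 1) * b) := by
        have := partlog_le hb0 hb1 (m + 1)
        push_cast at this
        gcongr
    _ = a ^ (m + 1) * b := by field_simp
    _ ≤ a ^ m * b := by
        have : a ^ (m + 1) ≤ a ^ m := pow_le_pow_of_le_one ha0 ha1.le (by omega)
        gcongr

lemma summable_gg {a b : ℝ} (ha0 : 0 ≤ a) (ha1 : a < 1) (hb0 : 0 ≤ b) (hb1 : b ≤ 1) :
    Summable (fun m : ℕ => a ^ (m + 1) / ((m : ℝ) + 1) * partlog (m + 1) b) :=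
  Summable.of_nonneg_of_le (gg_term_nonneg ha0 hb0) (gg_term_le ha0 ha1 hb0 hb1)
    ((summable_geometric_of_lt_one ha0 ha1).mul_right b)

lemma gg_nonneg {a b : ℝ} (ha0 : 0 ≤ a) (hb0 : 0 ≤ b) : 0 ≤ gg a b := by
  unfold gg
  exact tsum_nonneg (gg_term_nonneg ha0 hb0)

lemma gg_le {a b : ℝ} (ha0 : 0 ≤ a) (ha1 : a < 1) (hb0 : 0 ≤ b) (hb1 : b ≤ 1) :
    gg a b ≤ (1 - a)⁻¹ * b := by
  unfold gg
  have hgeo : HasSum (fun m : ℕ => a ^ m * b) ((1 - a)⁻¹ * b) :=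
    (hasSum_geometric_of_lt_one ha0 ha1).mul_right b
  have h := Summable.tsum_le_tsum (gg_term_le ha0 ha1 hb0 hb1)
    (summable_gg ha0 ha1 hb0 hb1) hgeo.summable
  rwa [hgeo.tsum_eq] at h

lemma S1_eval {a b : ℝ} (ha0 : 0 < a) (ha1 : a < 1) (hb0 : 0 ≤ b) (hb1 : b ≤ 1) :
    ∑' m : ℕ, a ^ m * partlog (m + 1) b = -Real.log (1 - a * b) / (a * (1 - a)) := by
  have ha : a ≠ 0 := ne_of_gt ha0
  have h1a : (1:ℝ) - a ≠ 0 := by intro h; rw [sub_eq_zero] at h; exact absurd h.symm (ne_of_lt ha1)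
  have hab1 : a * b < 1 := lt_of_le_of_lt (mul_le_of_le_one_right ha0.le hb1) ha1
  have habs : |a * b| < 1 := abs_lt.2 ⟨by nlinarith, hab1⟩
  set S := ∑' m : ℕ, a ^ m * partlog (m + 1) b with hS
  have hsum1 := summable_S1 ha0.le ha1 hb0 hb1
  have hsum0 := summable_S0 ha0.le ha1 hb0 hb1
  have hshift : ∑' m : ℕ, a ^ m * partlog m b = a * S := by
    have h0 : ∑' m : ℕ, a ^ m * partlog m b
        = (a ^ 0 * partlog 0 b) + ∑' m : ℕ, a ^ (m + 1) * partlog (m + 1) b :=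
      Summable.tsum_eq_zero_add hsum0
    have h1 : partlog 0 b = 0 := by simp [partlog]
    rw [h1] at h0
    simp only [mul_zero, zero_add] at h0
    rw [h0, hS, ← tsum_mul_left]
    exact tsum_congr fun m => by ring
  have hdiff : S - a * S = ∑' m : ℕ, a ^ m * (b ^ (m + 1) / ((m : ℝ) + 1)) := by
    rw [← hshift, hS, ← Summable.tsum_sub hsum1 hsum0]
    exact tsum_congr fun m => by rw [partlog_succ]; ring
  have heval : HasSum (fun m : ℕ => a ^ m * (b ^ (m + 1) / ((m : ℝ) + 1)))
      (a⁻¹ * -Real.log (1 - a * b)) := by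
    have h := (hasSum_pow_div_log_of_abs_lt_one habs).mul_left a⁻¹
    have heq : (fun m : ℕ => a⁻¹ * ((a * b) ^ (m + 1) / ((m : ℝ) + 1)))
        = fun m : ℕ => a ^ m * (b ^ (m + 1) / ((m : ℝ) + 1)) := by
      funext m
      have hm : ((m : ℝ) + 1) ≠ 0 := by positivity
      rw [mul_pow, pow_succ]
      field_simp

    rwa [heq] at h
  have hkey : S * (1 - a) = a⁻¹ * -Real.log (1 - a * b) := by
    calc S * (1 - a) = S - a * S := by ring
      _ = a⁻¹ * -Real.log (1 - a * b) := by rw [hdiff, heval.tsum_eq]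
  have : S = a⁻¹ * -Real.log (1 - a * b) / (1 - a) := by
    rw [← hkey]
    field_simp
  rw [this]
  field_simp

lemma S2_eval {a b : ℝ} (ha0 : 0 < a) (ha1 : a < 1) (hb0 : 0 ≤ b) (hb1 : b < 1) :
    ∑' m : ℕ, a ^ (m + 1) / ((m : ℝ) + 1) * ∑ k ∈ Finset.range (m + 1), b ^ k
      = (Real.log (1 - a) - Real.log (1 - a * b)) / (b - 1) := by
  have hb1' : b ≠ 1 := ne_of_lt hb1
  have hbne : b - 1 ≠ 0 := sub_ne_zero.2 hb1'
  have hab1 : a * b < 1 := lt_of_le_of_lt (mul_le_of_le_one_right ha0.le hb1.le) ha1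
  have habs : |a * b| < 1 := abs_lt.2 ⟨by nlinarith, hab1⟩
  have habsa : |a| < 1 := abs_lt.2 ⟨by linarith, ha1⟩
  have H1 := hasSum_pow_div_log_of_abs_lt_one habs
  have H2 := hasSum_pow_div_log_of_abs_lt_one habsa
  have H := (H1.sub H2).div_const (b - 1)
  have heq : (fun m : ℕ => ((a * b) ^ (m + 1) / ((m : ℝ) + 1) - a ^ (m + 1) / ((m : ℝ) + 1)) / (b - 1))
      = fun m : ℕ => a ^ (m + 1) / ((m : ℝ) + 1) * ∑ k ∈ Finset.range (m + 1), b ^ k := by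
    funext m
    have hm : ((m : ℝ) + 1) ≠ 0 := by positivity
    rw [geom_sum_eq hb1', mul_pow]
    field_simp

  rw [heq] at H
  rw [H.tsum_eq]
  ring

lemma hasDerivAt_partlog (n : ℕ) (b : ℝ) :
    HasDerivAt (fun y => partlog n y) (∑ k ∈ Finset.range n, b ^ k) b := by
  unfold partlog
  apply HasDerivAt.fun_sum
  intro k _
  have hk : ((k : ℝ) + 1) ≠ 0 := by positivity
  have hd := (hasDerivAt_pow (k + 1) b).div_const ((k : ℝ) + 1)
  refine hd.congr_deriv ?_
  push_cast
  field_simp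

lemma summable_S2 {a b : ℝ} (ha0 : 0 ≤ a) (ha1 : a < 1) (hb0 : 0 ≤ b) (hb1 : b ≤ 1) :
    Summable (fun m : ℕ => a ^ (m + 1) / ((m : ℝ) + 1) * ∑ k ∈ Finset.range (m + 1), b ^ k) := by
  refine Summable.of_nonneg_of_le (fun m => ?_) (fun m => ?_)
    (summable_geometric_of_lt_one ha0 ha1)
  · have h1 : (0:ℝ) < (m : ℝ) + 1 := by positivity
    exact mul_nonneg (div_nonneg (pow_nonneg ha0 _) h1.le)
      (Finset.sum_nonneg fun k _ => pow_nonneg hb0 _)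
  · have h1 : (0:ℝ) < (m : ℝ) + 1 := by positivity
    have hgeom : (∑ k ∈ Finset.range (m + 1), b ^ k) ≤ (m : ℝ) + 1 := by
      calc (∑ k ∈ Finset.range (m + 1), b ^ k) ≤ ∑ k ∈ Finset.range (m + 1), 1 :=
            Finset.sum_le_sum fun k _ => pow_le_one₀ hb0 hb1
        _ = (m : ℝ) + 1 := by simp
    calc a ^ (m + 1) / ((m : ℝ) + 1) * ∑ k ∈ Finset.range (m + 1), b ^ k
        ≤ a ^ (m + 1) / ((m : ℝ) + 1) * ((m : ℝ) + 1) := by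
          gcongr
      _ = a ^ (m + 1) := by field_simp
      _ ≤ a ^ m := pow_le_pow_of_le_one ha0 ha1.le (by omega)

lemma hasDerivAt_gg_comp {A B A' B' : ℝ → ℝ} {t : Set ℝ} {ρ c : ℝ}
    (ht : IsOpen t) (htc : Convex ℝ t)
    (hρ0 : 0 ≤ ρ) (hρ1 : ρ < 1) (hc : 0 ≤ c)
    (hA : ∀ x ∈ t, HasDerivAt A (A' x) x) (hB : ∀ x ∈ t, HasDerivAt B (B' x) x)
    (hAr : ∀ x ∈ t, 0 ≤ A x ∧ A x ≤ ρ) (hBr : ∀ x ∈ t, 0 ≤ B x ∧ B x ≤ 1)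
    (hA' : ∀ x ∈ t, |A' x| ≤ c) (hB' : ∀ x ∈ t, |B' x| ≤ c)
    {x₀ : ℝ} (hx₀ : x₀ ∈ t) :
    HasDerivAt (fun x => gg (A x) (B x))
      (∑' m : ℕ, (A' x₀ * (A x₀ ^ m * partlog (m + 1) (B x₀))
        + B' x₀ * (A x₀ ^ (m + 1) / ((m : ℝ) + 1) * ∑ k ∈ Finset.range (m + 1), B x₀ ^ k))) x₀ := by
  have key := hasDerivAt_tsum_of_isPreconnected
    (u := fun m : ℕ => 2 * c * (((m : ℝ) + 1) * ρ ^ m))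
    (((summable_succ_mul_geom hρ0 hρ1)).mul_left (2 * c)) ht htc.isPreconnected
    (g := fun (m : ℕ) (x : ℝ) => A x ^ (m + 1) / ((m : ℝ) + 1) * partlog (m + 1) (B x))
    (g' := fun m x => A' x * (A x ^ m * partlog (m + 1) (B x))
        + B' x * (A x ^ (m + 1) / ((m : ℝ) + 1) * ∑ k ∈ Finset.range (m + 1), B x ^ k))
    ?_ ?_ hx₀ ?_ hx₀
  · exact key
  · -- derivatives
    intro m x hx
    have hm : ((m : ℝ) + 1) ≠ 0 := by positivity
    have h1 : HasDerivAt (fun x => A x ^ (m + 1)) ((((m : ℕ) + 1 : ℕ) : ℝ) * A x ^ m * A' x) x := by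
      have := (hasDerivAt_pow (m + 1) (A x)).comp x (hA x hx)
      simpa [mul_assoc, Function.comp_def] using this
    have h2 : HasDerivAt (fun x => partlog (m + 1) (B x))
        ((∑ k ∈ Finset.range (m + 1), B x ^ k) * B' x) x :=
      (hasDerivAt_partlog (m + 1) (B x)).comp x (hB x hx)
    have h3 := (h1.div_const ((m : ℝ) + 1)).mul h2
    refine h3.congr_deriv ?_
    push_cast
    field_simp
  · -- bounds
    intro m x hx
    obtain ⟨hA0, hAρ⟩ := hAr x hx
    obtain ⟨hB0, hB1⟩ := hBr x hx
    have hm : (0:ℝ) < (m : ℝ) + 1 := by positivity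
    have hpow : A x ^ m ≤ ρ ^ m := pow_le_pow_left₀ hA0 hAρ m
    have hpow1 : A x ^ (m + 1) ≤ ρ ^ m :=
      le_trans (pow_le_pow_left₀ hA0 hAρ (m + 1)) (pow_le_pow_of_le_one hρ0 hρ1.le (by omega))
    have hpl0 : 0 ≤ partlog (m + 1) (B x) := partlog_nonneg hB0 _
    have hpl : partlog (m + 1) (B x) ≤ (m : ℝ) + 1 := by
      have h := partlog_le hB0 hB1 (m + 1)
      push_cast at h
      nlinarith [Nat.cast_nonneg (α := ℝ) m]
    have hgeom0 : 0 ≤ ∑ k ∈ Finset.range (m + 1), B x ^ k :=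
      Finset.sum_nonneg fun k _ => pow_nonneg hB0 _
    have hgeom : (∑ k ∈ Finset.range (m + 1), B x ^ k) ≤ (m : ℝ) + 1 := by
      calc (∑ k ∈ Finset.range (m + 1), B x ^ k) ≤ ∑ k ∈ Finset.range (m + 1), 1 :=
            Finset.sum_le_sum fun k _ => pow_le_one₀ hB0 hB1
        _ = (m : ℝ) + 1 := by simp
    have hρm : (0:ℝ) ≤ ρ ^ m := pow_nonneg hρ0 m
    have e1 : |A' x * (A x ^ m * partlog (m + 1) (B x))| ≤ c * (((m : ℝ) + 1) * ρ ^ m) := by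
      rw [abs_mul]
      have hinner : |A x ^ m * partlog (m + 1) (B x)| ≤ ((m : ℝ) + 1) * ρ ^ m := by
        rw [abs_mul, abs_pow, abs_of_nonneg hA0, abs_of_nonneg hpl0]
        nlinarith [pow_nonneg hA0 m]
      exact mul_le_mul (hA' x hx) hinner (abs_nonneg _) hc
    have e2 : |B' x * (A x ^ (m + 1) / ((m : ℝ) + 1) * ∑ k ∈ Finset.range (m + 1), B x ^ k)|
        ≤ c * (((m : ℝ) + 1) * ρ ^ m) := by
      rw [abs_mul]
      have hdivle : A x ^ (m + 1) / ((m : ℝ) + 1) ≤ ρ ^ m := by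
        have h1le : (1:ℝ) ≤ (m : ℝ) + 1 := by simp
        calc A x ^ (m + 1) / ((m : ℝ) + 1) ≤ A x ^ (m + 1) / 1 := by
              gcongr
          _ = A x ^ (m + 1) := div_one _
          _ ≤ ρ ^ m := hpow1
      have hdiv0 : 0 ≤ A x ^ (m + 1) / ((m : ℝ) + 1) := by positivity
      have hinner : |A x ^ (m + 1) / ((m : ℝ) + 1) * ∑ k ∈ Finset.range (m + 1), B x ^ k|
          ≤ ρ ^ m * ((m : ℝ) + 1) := by
        rw [abs_mul, abs_of_nonneg hdiv0, abs_of_nonneg hgeom0]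
        exact mul_le_mul hdivle hgeom hgeom0 hρm
      calc |B' x| * |A x ^ (m + 1) / ((m : ℝ) + 1) * ∑ k ∈ Finset.range (m + 1), B x ^ k|
          ≤ c * (ρ ^ m * ((m : ℝ) + 1)) := mul_le_mul (hB' x hx) hinner (abs_nonneg _) hc
        _ = c * (((m : ℝ) + 1) * ρ ^ m) := by ring
    calc ‖A' x * (A x ^ m * partlog (m + 1) (B x))
          + B' x * (A x ^ (m + 1) / ((m : ℝ) + 1) * ∑ k ∈ Finset.range (m + 1), B x ^ k)‖
        ≤ |A' x * (A x ^ m * partlog (m + 1) (B x))|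
          + |B' x * (A x ^ (m + 1) / ((m : ℝ) + 1) * ∑ k ∈ Finset.range (m + 1), B x ^ k)| :=
          abs_add_le _ _
      _ ≤ c * (((m : ℝ) + 1) * ρ ^ m) + c * (((m : ℝ) + 1) * ρ ^ m) := add_le_add e1 e2
      _ = 2 * c * (((m : ℝ) + 1) * ρ ^ m) := by ring
  · -- summable at x₀
    obtain ⟨hA0, hAρ⟩ := hAr x₀ hx₀
    obtain ⟨hB0, hB1⟩ := hBr x₀ hx₀
    exact summable_gg hA0 (lt_of_le_of_lt hAρ hρ1) hB0 hB1

lemma master {q : ℝ} (hq0 : 0 < q) (hq1 : q < 1) :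
    ∀ p ∈ Ioo (0:ℝ) (1 - q),
      gg (1 - p) (1 - q / (1 - p)) + gg (1 - q) (1 - p / (1 - q))
        = Real.log p * Real.log q + li2 (1 - p) + li2 (1 - q) - z2 := by
  have h1q : (0:ℝ) < 1 - q := by linarith
  set f : ℝ → ℝ := fun y => gg (1 - y) (1 - q / (1 - y)) + gg (1 - q) (1 - y / (1 - q))
      - (Real.log y * Real.log q + li2 (1 - y) + li2 (1 - q) - z2) with hf
  have hmain : ∀ y ∈ Ioo (0:ℝ) (1 - q), f y = 0 := by
    apply eq_of_deriv_zero_of_tendsto h1q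
    · -- derivative is zero
      intro x hx
      obtain ⟨hx0, hx1q⟩ := hx
      have hx1 : x < 1 := by linarith
      have h1x : (0:ℝ) < 1 - x := by linarith
      have hq1x : q < 1 - x := by linarith
      -- the open neighbourhood
      set lo := x / 2 with hlo
      set hi := (x + (1 - q)) / 2 with hhi
      have hlo0 : 0 < lo := by rw [hlo]; linarith
      have hxlo : lo < x := by rw [hlo]; linarith
      have hxhi : x < hi := by rw [hhi]; linarith
      have hhiq : hi < 1 - q := by rw [hhi]; linarith
      have hmemt : x ∈ Ioo lo hi := ⟨hxlo, hxhi⟩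
      set ρ := max (1 - lo) (1 - q) with hρ
      have hρ1 : ρ < 1 := max_lt (by linarith) (by linarith)
      have hρ0 : (0:ℝ) ≤ ρ := le_trans (by linarith) (le_max_right _ _)
      set c := 1 + q⁻¹ + (1 - q)⁻¹ with hc
      have hqi0 : 0 < q⁻¹ := inv_pos.2 hq0
      have h1qi0 : 0 < (1 - q)⁻¹ := inv_pos.2 h1q
      have hc0 : (0:ℝ) ≤ c := by rw [hc]; linarith
      have hyfacts : ∀ y ∈ Ioo lo hi, 0 < y ∧ y < 1 - q := by
        intro y hy
        exact ⟨lt_trans hlo0 hy.1, lt_trans hy.2 hhiq⟩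
      -- first composite
      have core1 := hasDerivAt_gg_comp (A := fun y => 1 - y) (B := fun y => 1 - q / (1 - y))
        (A' := fun _ => -1) (B' := fun y => -q / (1 - y) ^ 2)
        (t := Ioo lo hi) (ρ := ρ) (c := c) isOpen_Ioo (convex_Ioo _ _) hρ0 hρ1 hc0
        (fun y _ => by simpa using (hasDerivAt_id y).const_sub 1)
        (fun y hy => by
          obtain ⟨hy0, hyq⟩ := hyfacts y hy
          have h1y : (0:ℝ) < 1 - y := by linarith
          have hd := ((hasDerivAt_const y q).div ((hasDerivAt_id y).const_sub 1) h1y.ne').const_sub 1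
          refine hd.congr_deriv ?_
          simp only [id, zero_mul, zero_sub, neg_neg]; field_simp)
        (fun y hy => by
          obtain ⟨hy0, hyq⟩ := hyfacts y hy
          refine ⟨show (0:ℝ) ≤ 1 - y by linarith [hq0], ?_⟩
          show 1 - y ≤ ρ
          calc 1 - y ≤ 1 - lo := by linarith [hy.1]
            _ ≤ ρ := le_max_left _ _)
        (fun y hy => by
          obtain ⟨hy0, hyq⟩ := hyfacts y hy
          have h1y : (0:ℝ) < 1 - y := by linarith
          refine ⟨?_, ?_⟩
          · show (0:ℝ) ≤ 1 - q / (1 - y)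
            have : q / (1 - y) ≤ 1 := by
              rw [div_le_one h1y]
              linarith
            linarith
          · show 1 - q / (1 - y) ≤ 1
            have : 0 ≤ q / (1 - y) := by positivity
            linarith)
        (fun y _ => by
          show |(-1:ℝ)| ≤ c
          rw [abs_of_nonpos (by norm_num : (-1:ℝ) ≤ 0)]
          rw [hc]; linarith)
        (fun y hy => by
          obtain ⟨hy0, hyq⟩ := hyfacts y hy
          have h1y : (0:ℝ) < 1 - y := by linarith
          have hq1y : q < 1 - y := by linarith
          show |-q / (1 - y) ^ 2| ≤ c
          have habs : |-q / (1 - y) ^ 2| = q / (1 - y) ^ 2 := by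
            rw [abs_div, abs_neg, abs_of_pos hq0, abs_of_pos (by positivity : (0:ℝ) < (1 - y) ^ 2)]
          rw [habs]
          have hle : q / (1 - y) ^ 2 ≤ q⁻¹ := by
            rw [div_le_iff₀ (by positivity : (0:ℝ) < (1 - y) ^ 2)]
            rw [inv_mul_eq_div, le_div_iff₀ hq0]
            nlinarith
          rw [hc]; linarith)
        hmemt
      -- second composite
      have core2 := hasDerivAt_gg_comp (A := fun _ => 1 - q) (B := fun y => 1 - y / (1 - q))
        (A' := fun _ => 0) (B' := fun _ => -(1 - q)⁻¹)
        (t := Ioo lo hi) (ρ := ρ) (c := c) isOpen_Ioo (convex_Ioo _ _) hρ0 hρ1 hc0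
        (fun y _ => hasDerivAt_const y (1 - q))
        (fun y _ => by
          have hd := ((hasDerivAt_id y).div_const (1 - q)).const_sub 1
          refine hd.congr_deriv ?_
          field_simp)
        (fun y _ => ⟨show (0:ℝ) ≤ 1 - q by linarith, show 1 - q ≤ ρ from le_max_right _ _⟩)
        (fun y hy => by
          obtain ⟨hy0, hyq⟩ := hyfacts y hy
          refine ⟨?_, ?_⟩
          · show (0:ℝ) ≤ 1 - y / (1 - q)
            have : y / (1 - q) ≤ 1 := by
              rw [div_le_one h1q]
              linarith
            linarith
          · show 1 - y / (1 - q) ≤ 1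
            have : 0 ≤ y / (1 - q) := by positivity
            linarith)
        (fun y _ => by
          show |(0:ℝ)| ≤ c
          simpa using hc0)
        (fun y _ => by
          show |-(1 - q)⁻¹| ≤ c
          rw [abs_neg, abs_of_pos h1qi0]
          rw [hc]; linarith)
        hmemt
      -- restate with beta-reduced values
      have core1' : HasDerivAt (fun y : ℝ => gg (1 - y) (1 - q / (1 - y)))
          (∑' m : ℕ, ((-1) * ((1 - x) ^ m * partlog (m + 1) (1 - q / (1 - x)))
            + (-q / (1 - x) ^ 2) * ((1 - x) ^ (m + 1) / ((m : ℝ) + 1)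
              * ∑ k ∈ Finset.range (m + 1), (1 - q / (1 - x)) ^ k))) x := core1
      have core2' : HasDerivAt (fun y : ℝ => gg (1 - q) (1 - y / (1 - q)))
          (∑' m : ℕ, ((0:ℝ) * ((1 - q) ^ m * partlog (m + 1) (1 - x / (1 - q)))
            + (-(1 - q)⁻¹) * ((1 - q) ^ (m + 1) / ((m : ℝ) + 1)
              * ∑ k ∈ Finset.range (m + 1), (1 - x / (1 - q)) ^ k))) x := core2
      -- facts about b1 and b2
      have hb10 : (0:ℝ) ≤ 1 - q / (1 - x) := by
        have : q / (1 - x) ≤ 1 := by rw [div_le_one h1x]; linarith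
        linarith
      have hb11 : 1 - q / (1 - x) < 1 := by
        have : 0 < q / (1 - x) := by positivity
        linarith
      have hb20 : (0:ℝ) ≤ 1 - x / (1 - q) := by
        have : x / (1 - q) ≤ 1 := by rw [div_le_one h1q]; linarith
        linarith
      have hb21 : 1 - x / (1 - q) < 1 := by
        have : 0 < x / (1 - q) := by positivity
        linarith
      have ha11 : 1 - x < 1 := by linarith
      have ha21 : 1 - q < 1 := by linarith
      -- evaluate the series
      have hS1v : ∑' m : ℕ, (1 - x) ^ m * partlog (m + 1) (1 - q / (1 - x))
          = -Real.log (x + q) / ((1 - x) * x) := by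
        rw [S1_eval h1x ha11 hb10 hb11.le]
        rw [show (1 - x) * (1 - q / (1 - x)) = 1 - x - q by field_simp]
        rw [show (1:ℝ) - (1 - x - q) = x + q by ring]
        rw [show (1:ℝ) - (1 - x) = x by ring]
      have hS2v : ∑' m : ℕ, (1 - x) ^ (m + 1) / ((m : ℝ) + 1)
            * ∑ k ∈ Finset.range (m + 1), (1 - q / (1 - x)) ^ k
          = (Real.log x - Real.log (x + q)) / (1 - q / (1 - x) - 1) := by
        rw [S2_eval h1x ha11 hb10 hb11]
        rw [show (1 - x) * (1 - q / (1 - x)) = 1 - x - q by field_simp]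
        rw [show (1:ℝ) - (1 - x - q) = x + q by ring]
        rw [show (1:ℝ) - (1 - x) = x by ring]
      have hS2v2 : ∑' m : ℕ, (1 - q) ^ (m + 1) / ((m : ℝ) + 1)
            * ∑ k ∈ Finset.range (m + 1), (1 - x / (1 - q)) ^ k
          = (Real.log q - Real.log (x + q)) / (1 - x / (1 - q) - 1) := by
        rw [S2_eval h1q ha21 hb20 hb21]
        rw [show (1 - q) * (1 - x / (1 - q)) = 1 - q - x by field_simp]
        rw [show (1:ℝ) - (1 - q - x) = x + q by ring]
        rw [show (1:ℝ) - (1 - q) = q by ring]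
      -- split the tsums
      have hsplit1 : (∑' m : ℕ, ((-1) * ((1 - x) ^ m * partlog (m + 1) (1 - q / (1 - x)))
            + (-q / (1 - x) ^ 2) * ((1 - x) ^ (m + 1) / ((m : ℝ) + 1)
              * ∑ k ∈ Finset.range (m + 1), (1 - q / (1 - x)) ^ k)))
          = (-1) * (∑' m : ℕ, (1 - x) ^ m * partlog (m + 1) (1 - q / (1 - x)))
            + (-q / (1 - x) ^ 2) * ∑' m : ℕ, (1 - x) ^ (m + 1) / ((m : ℝ) + 1)
              * ∑ k ∈ Finset.range (m + 1), (1 - q / (1 - x)) ^ k := by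
        rw [Summable.tsum_add ((summable_S1 h1x.le ha11 hb10 hb11.le).mul_left _)
          ((summable_S2 h1x.le ha11 hb10 hb11.le).mul_left _), tsum_mul_left, tsum_mul_left]
      have hsplit2 : (∑' m : ℕ, ((0:ℝ) * ((1 - q) ^ m * partlog (m + 1) (1 - x / (1 - q)))
            + (-(1 - q)⁻¹) * ((1 - q) ^ (m + 1) / ((m : ℝ) + 1)
              * ∑ k ∈ Finset.range (m + 1), (1 - x / (1 - q)) ^ k)))
          = (0:ℝ) * (∑' m : ℕ, (1 - q) ^ m * partlog (m + 1) (1 - x / (1 - q)))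
            + (-(1 - q)⁻¹) * ∑' m : ℕ, (1 - q) ^ (m + 1) / ((m : ℝ) + 1)
              * ∑ k ∈ Finset.range (m + 1), (1 - x / (1 - q)) ^ k := by
        rw [Summable.tsum_add ((summable_S1 h1q.le ha21 hb20 hb21.le).mul_left _)
          ((summable_S2 h1q.le ha21 hb20 hb21.le).mul_left _), tsum_mul_left, tsum_mul_left]
      -- derivative of the elementary part
      have hsub : HasDerivAt (fun y : ℝ => 1 - y) (-1) x := by
        simpa using (hasDerivAt_id x).const_sub 1
      have habs1x : |1 - x| < 1 := abs_lt.2 ⟨by linarith, by linarith⟩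
      have hli2d : HasDerivAt (fun y : ℝ => li2 (1 - y))
          (-Real.log (1 - (1 - x)) / (1 - x) * (-1)) x :=
        (hasDerivAt_li2 h1x.ne' habs1x).comp x hsub
      have hlogd : HasDerivAt (fun y : ℝ => Real.log y * Real.log q) (x⁻¹ * Real.log q) x :=
        (Real.hasDerivAt_log hx0.ne').mul_const _
      have hD3 := ((hlogd.add hli2d).add_const (li2 (1 - q))).sub_const z2
      have htot := (core1'.add core2').sub hD3
      have hEq : (∑' m : ℕ, ((-1) * ((1 - x) ^ m * partlog (m + 1) (1 - q / (1 - x)))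
            + (-q / (1 - x) ^ 2) * ((1 - x) ^ (m + 1) / ((m : ℝ) + 1)
              * ∑ k ∈ Finset.range (m + 1), (1 - q / (1 - x)) ^ k)))
          + (∑' m : ℕ, ((0:ℝ) * ((1 - q) ^ m * partlog (m + 1) (1 - x / (1 - q)))
            + (-(1 - q)⁻¹) * ((1 - q) ^ (m + 1) / ((m : ℝ) + 1)
              * ∑ k ∈ Finset.range (m + 1), (1 - x / (1 - q)) ^ k)))
          - (x⁻¹ * Real.log q + -Real.log (1 - (1 - x)) / (1 - x) * (-1)) = 0 := by
        rw [hsplit1, hsplit2, hS1v, hS2v, hS2v2]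
        rw [show (1:ℝ) - (1 - x) = x by ring]
        rw [show (1:ℝ) - q / (1 - x) - 1 = -(q / (1 - x)) by ring]
        rw [show (1:ℝ) - x / (1 - q) - 1 = -(x / (1 - q)) by ring]
        field_simp
        ring
      exact hEq ▸ htot
    · -- limit at 1 - q
      have hid : Tendsto (fun y : ℝ => y) (𝓝[Ioo (0:ℝ) (1 - q)] (1 - q)) (𝓝 (1 - q)) :=
        tendsto_id.mono_left nhdsWithin_le_nhds
      have hB1 : Tendsto (fun y : ℝ => 1 - q / (1 - y)) (𝓝[Ioo (0:ℝ) (1 - q)] (1 - q)) (𝓝 0) := by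
        have h1 : (1:ℝ) - (1 - q) ≠ 0 := by
          rw [show (1:ℝ) - (1 - q) = q by ring]; exact hq0.ne'
        have hc : ContinuousAt (fun y : ℝ => 1 - q / (1 - y)) (1 - q) :=
          continuousAt_const.sub (continuousAt_const.div
            (continuousAt_const.sub continuousAt_id) h1)
        have h2 := hc.tendsto.mono_left (nhdsWithin_le_nhds
          (s := Ioo (0:ℝ) (1 - q)))
        rw [show (1:ℝ) - q / (1 - (1 - q)) = 0 by
          rw [show (1:ℝ) - (1 - q) = q by ring]; field_simp; ring] at h2
        exact h2
      have hB2 : Tendsto (fun y : ℝ => 1 - y / (1 - q)) (𝓝[Ioo (0:ℝ) (1 - q)] (1 - q)) (𝓝 0) := by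
        have h2 := (tendsto_const_nhds (x := (1:ℝ))
          (f := 𝓝[Ioo (0:ℝ) (1 - q)] (1 - q))).sub (hid.div_const (1 - q))
        rw [div_self h1q.ne', sub_self] at h2
        exact h2
      have hg1 : Tendsto (fun y : ℝ => gg (1 - y) (1 - q / (1 - y)))
          (𝓝[Ioo (0:ℝ) (1 - q)] (1 - q)) (𝓝 0) := by
        have hbd : Tendsto (fun y : ℝ => y⁻¹ * (1 - q / (1 - y)))
            (𝓝[Ioo (0:ℝ) (1 - q)] (1 - q)) (𝓝 0) := by
          have := (hid.inv₀ h1q.ne').mul hB1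
          rwa [mul_zero] at this
        refine squeeze_zero' ?_ ?_ hbd
        · filter_upwards [eventually_mem_nhdsWithin] with y hy
          have h1y : (0:ℝ) < 1 - y := by
            have := hy.2; linarith
          have hb0 : (0:ℝ) ≤ 1 - q / (1 - y) := by
            have : q / (1 - y) ≤ 1 := by
              rw [div_le_one h1y]; linarith [hy.2]
            linarith
          exact gg_nonneg (by linarith) hb0
        · filter_upwards [eventually_mem_nhdsWithin] with y hy
          have h1y : (0:ℝ) < 1 - y := by
            have := hy.2; linarith
          have hb0 : (0:ℝ) ≤ 1 - q / (1 - y) := by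
            have : q / (1 - y) ≤ 1 := by
              rw [div_le_one h1y]; linarith [hy.2]
            linarith
          have hb1' : 1 - q / (1 - y) ≤ 1 := by
            have : 0 ≤ q / (1 - y) := div_nonneg hq0.le h1y.le
            linarith
          have := gg_le (by linarith : (0:ℝ) ≤ 1 - y)
            (by linarith [hy.1] : 1 - y < 1) hb0 hb1'
          rwa [show (1:ℝ) - (1 - y) = y by ring] at this
      have hg2 : Tendsto (fun y : ℝ => gg (1 - q) (1 - y / (1 - q)))
          (𝓝[Ioo (0:ℝ) (1 - q)] (1 - q)) (𝓝 0) := by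
        have hbd : Tendsto (fun y : ℝ => q⁻¹ * (1 - y / (1 - q)))
            (𝓝[Ioo (0:ℝ) (1 - q)] (1 - q)) (𝓝 0) := by
          have := (tendsto_const_nhds (x := q⁻¹)
            (f := 𝓝[Ioo (0:ℝ) (1 - q)] (1 - q))).mul hB2
          rwa [mul_zero] at this
        refine squeeze_zero' ?_ ?_ hbd
        · filter_upwards [eventually_mem_nhdsWithin] with y hy
          have hb0 : (0:ℝ) ≤ 1 - y / (1 - q) := by
            have : y / (1 - q) ≤ 1 := by
              rw [div_le_one h1q]; linarith [hy.2]
            linarith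
          exact gg_nonneg (by linarith) hb0
        · filter_upwards [eventually_mem_nhdsWithin] with y hy
          have hb0 : (0:ℝ) ≤ 1 - y / (1 - q) := by
            have : y / (1 - q) ≤ 1 := by
              rw [div_le_one h1q]; linarith [hy.2]
            linarith
          have hb1' : 1 - y / (1 - q) ≤ 1 := by
            have : 0 ≤ y / (1 - q) := div_nonneg hy.1.le h1q.le
            linarith
          have := gg_le (by linarith : (0:ℝ) ≤ 1 - q)
            (by linarith : 1 - q < 1) hb0 hb1'
          rwa [show (1:ℝ) - (1 - q) = q by ring] at this
      have hlog : Tendsto (fun y : ℝ => Real.log y * Real.log q)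
          (𝓝[Ioo (0:ℝ) (1 - q)] (1 - q)) (𝓝 (Real.log (1 - q) * Real.log q)) :=
        (((Real.continuousAt_log h1q.ne').tendsto).comp hid).mul_const _
      have hmapq : Tendsto (fun y : ℝ => 1 - y) (𝓝[Ioo (0:ℝ) (1 - q)] (1 - q)) (𝓝 q) := by
        have h2 := (continuous_sub_left (1:ℝ)).tendsto (1 - q)
        rw [show (1:ℝ) - (1 - q) = q by ring] at h2
        exact h2.mono_left nhdsWithin_le_nhds
      have hli : Tendsto (fun y : ℝ => li2 (1 - y))
          (𝓝[Ioo (0:ℝ) (1 - q)] (1 - q)) (𝓝 (li2 q)) := by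
        have hct : ContinuousAt li2 q :=
          (hasDerivAt_li2 hq0.ne' (abs_lt.2 ⟨by linarith, hq1⟩)).continuousAt
        exact hct.tendsto.comp hmapq
      have htotal := (hg1.add hg2).sub
        (((hlog.add hli).add_const (li2 (1 - q))).sub_const z2)
      have href := li2_reflection (show q ∈ Ioo (0:ℝ) 1 from ⟨hq0, hq1⟩)
      have hval : (0:ℝ) + 0 - (Real.log (1 - q) * Real.log q + li2 q + li2 (1 - q) - z2) = 0 := by
        have hcomm : Real.log (1 - q) * Real.log q = Real.log q * Real.log (1 - q) :=
          mul_comm _ _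
        linarith
      rw [hval] at htotal
      exact htotal

  intro p hp
  have hzero := hmain p hp
  rw [hf] at hzero
  linarith [hzero]

lemma hasSum_tail {b : ℝ} (hb : |b| < 1) (m : ℕ) :
    HasSum (fun j : ℕ => b ^ (m + 2 + j) / ((m : ℝ) + 2 + (j : ℝ)))
      (-Real.log (1 - b) - partlog (m + 1) b) := by
  have H := hasSum_pow_div_log_of_abs_lt_one hb
  have h2 : HasSum (fun j : ℕ => b ^ (j + (m + 1) + 1) / ((((j + (m + 1)) : ℕ) : ℝ) + 1))
      (-Real.log (1 - b) - partlog (m + 1) b) := by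
    apply (hasSum_nat_add_iff (f := fun i : ℕ => b ^ (i + 1) / ((i : ℝ) + 1)) (m + 1)).2
    convert H using 1
    · rfl
    unfold partlog
    ring
  have heqf : (fun j : ℕ => b ^ (j + (m + 1) + 1) / ((((j + (m + 1)) : ℕ) : ℝ) + 1))
      = fun j : ℕ => b ^ (m + 2 + j) / ((m : ℝ) + 2 + (j : ℝ)) := by
    funext j
    rw [show j + (m + 1) + 1 = m + 2 + j by omega]
    push_cast
    ring_nf
  rwa [heqf] at h2

/-- For `p, q ∈ (0,1)` with `p + q < 1`,
`∑_{m=1}^∞ ∑_{k=m+1}^∞ [(1−p)^m (1−q/(1−p))^k + (1−q)^m (1−p/(1−q))^k]/(mk)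
 = log p · log q − log q · log(1−q) − log p · log(1−p) + ∑_{m=1}^∞ [1 − (1−p)^m − (1−q)^m]/m²`.
(The inner index `k` ranges over `k ≥ m+1`; here `m = m'+1`, `k = m'+2+j` for `m', j : ℕ`.) -/
theorem dilog_double_sum_identity (p q : ℝ)
    (hp : p ∈ Set.Ioo (0 : ℝ) 1) (hq : q ∈ Set.Ioo (0 : ℝ) 1) (hpq : p + q < 1) :
    ∑' m : ℕ, ∑' j : ℕ,
        ((1 - p) ^ (m + 1) * (1 - q / (1 - p)) ^ (m + 2 + j)
          + (1 - q) ^ (m + 1) * (1 - p / (1 - q)) ^ (m + 2 + j))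
          / ((m + 1 : ℝ) * (m + 2 + j : ℝ))
      = Real.log p * Real.log q - Real.log q * Real.log (1 - q)
          - Real.log p * Real.log (1 - p)
        + ∑' m : ℕ, (1 - (1 - p) ^ (m + 1) - (1 - q) ^ (m + 1)) / (m + 1 : ℝ) ^ 2 := by
  obtain ⟨hp0, hp1⟩ := hp
  obtain ⟨hq0, hq1⟩ := hq
  have h1p : (0:ℝ) < 1 - p := by linarith
  have h1q : (0:ℝ) < 1 - q := by linarith
  have hb10 : (0:ℝ) ≤ 1 - q / (1 - p) := by
    have : q / (1 - p) ≤ 1 := by rw [div_le_one h1p]; linarith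
    linarith
  have hb11 : 1 - q / (1 - p) < 1 := by
    have : 0 < q / (1 - p) := by positivity
    linarith
  have hb20 : (0:ℝ) ≤ 1 - p / (1 - q) := by
    have : p / (1 - q) ≤ 1 := by rw [div_le_one h1q]; linarith
    linarith
  have hb21 : 1 - p / (1 - q) < 1 := by
    have : 0 < p / (1 - q) := by positivity
    linarith
  have habs1 : |1 - q / (1 - p)| < 1 := abs_lt.2 ⟨by linarith, hb11⟩
  have habs2 : |1 - p / (1 - q)| < 1 := abs_lt.2 ⟨by linarith, hb21⟩
  have habsa1 : |1 - p| < 1 := abs_lt.2 ⟨by linarith, by linarith⟩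
  have habsa2 : |1 - q| < 1 := abs_lt.2 ⟨by linarith, by linarith⟩
  -- inner sums
  have hinner : ∀ m : ℕ,
      (∑' j : ℕ, ((1 - p) ^ (m + 1) * (1 - q / (1 - p)) ^ (m + 2 + j)
          + (1 - q) ^ (m + 1) * (1 - p / (1 - q)) ^ (m + 2 + j))
          / ((m + 1 : ℝ) * (m + 2 + j : ℝ)))
      = (1 - p) ^ (m + 1) / ((m : ℝ) + 1)
          * (-Real.log (1 - (1 - q / (1 - p))) - partlog (m + 1) (1 - q / (1 - p)))
        + (1 - q) ^ (m + 1) / ((m : ℝ) + 1)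
          * (-Real.log (1 - (1 - p / (1 - q))) - partlog (m + 1) (1 - p / (1 - q))) := by
    intro m
    have h1 := (hasSum_tail habs1 m).mul_left ((1 - p) ^ (m + 1) / ((m : ℝ) + 1))
    have h2 := (hasSum_tail habs2 m).mul_left ((1 - q) ^ (m + 1) / ((m : ℝ) + 1))
    have h3 := h1.add h2
    rw [← h3.tsum_eq]
    apply tsum_congr
    intro j
    have hm1 : ((m : ℝ) + 1) ≠ 0 := by positivity
    have hm2 : ((m : ℝ) + 2 + (j : ℝ)) ≠ 0 := by positivity
    field_simp

  -- outer sums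
  have HL1 : HasSum (fun m : ℕ => (1 - p) ^ (m + 1) / ((m : ℝ) + 1))
      (-Real.log (1 - (1 - p))) := hasSum_pow_div_log_of_abs_lt_one habsa1
  have HL2 : HasSum (fun m : ℕ => (1 - q) ^ (m + 1) / ((m : ℝ) + 1))
      (-Real.log (1 - (1 - q))) := hasSum_pow_div_log_of_abs_lt_one habsa2
  have H1 := HL1.mul_right (-Real.log (1 - (1 - q / (1 - p))))
  have H2 := HL2.mul_right (-Real.log (1 - (1 - p / (1 - q))))
  have H3 : HasSum (fun m : ℕ => (1 - p) ^ (m + 1) / ((m : ℝ) + 1)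
        * partlog (m + 1) (1 - q / (1 - p))) (gg (1 - p) (1 - q / (1 - p))) :=
    (summable_gg h1p.le (by linarith) hb10 hb11.le).hasSum
  have H4 : HasSum (fun m : ℕ => (1 - q) ^ (m + 1) / ((m : ℝ) + 1)
        * partlog (m + 1) (1 - p / (1 - q))) (gg (1 - q) (1 - p / (1 - q))) :=
    (summable_gg h1q.le (by linarith) hb20 hb21.le).hasSum
  have H := (H1.sub H3).add (H2.sub H4)
  have hLHS : (∑' m : ℕ, ∑' j : ℕ,
        ((1 - p) ^ (m + 1) * (1 - q / (1 - p)) ^ (m + 2 + j)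
          + (1 - q) ^ (m + 1) * (1 - p / (1 - q)) ^ (m + 2 + j))
          / ((m + 1 : ℝ) * (m + 2 + j : ℝ)))
      = -Real.log (1 - (1 - p)) * -Real.log (1 - (1 - q / (1 - p)))
          - gg (1 - p) (1 - q / (1 - p))
        + (-Real.log (1 - (1 - q)) * -Real.log (1 - (1 - p / (1 - q)))
          - gg (1 - q) (1 - p / (1 - q))) := by
    rw [← H.tsum_eq]
    apply tsum_congr
    intro m
    rw [hinner m]
    ring
  rw [hLHS]
  have hRHS : (∑' m : ℕ, (1 - (1 - p) ^ (m + 1) - (1 - q) ^ (m + 1)) / (m + 1 : ℝ) ^ 2)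
      = z2 - li2 (1 - p) - li2 (1 - q) := by
    have H' := (hasSum_z2.sub (hasSum_li2 habsa1.le)).sub (hasSum_li2 habsa2.le)
    rw [← H'.tsum_eq]
    apply tsum_congr
    intro m
    have hm1 : ((m : ℝ) + 1) ≠ 0 := by positivity
    push_cast
    ring
  rw [hRHS]
  have hmaster := master hq0 hq1 p ⟨hp0, by linarith⟩
  rw [show (1:ℝ) - (1 - p) = p by ring, show (1:ℝ) - (1 - q) = q by ring,
    show (1:ℝ) - (1 - q / (1 - p)) = q / (1 - p) by ring,
    show (1:ℝ) - (1 - p / (1 - q)) = p / (1 - q) by ring,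
    Real.log_div hq0.ne' h1p.ne', Real.log_div hp0.ne' h1q.ne']
  linear_combination -hmaster
end

section
/- Let p be a probability mass function on the positive integers with p_j = p(j) monotonically nonincreasing in j, and suppose there exist constants M > 0 and α ∈ (0,1) such that p_j ≤ M j^{−1/α} for all j. Fix a positive integer m. Then there exists a constant C > 0, not depending on k, such that ∑_{j=1}^{∞} p_j^m (1−p_j)^k ≤ C / k^{m−α} for all positive integers k. Moreover, if p_j = o(j^{−1/α}) as j → ∞, then ∑_{j=1}^{∞} p_j^m (1−p_j)^k = o(k^{−(m−α)}) as k → ∞. -/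
open Filter Asymptotics


lemma aux1 (m : ℕ) (hm : 1 ≤ m) {t : ℝ} (ht : 0 ≤ t) :
    t ^ m * Real.exp (-t) ≤ (m : ℝ) ^ m * Real.exp (-(m : ℝ)) := by
  have hm0 : (0:ℝ) < m := by exact_mod_cast hm
  rcases eq_or_lt_of_le ht with h | h
  · rw [← h, zero_pow (by omega), zero_mul]
    positivity
  · have hlog : Real.log (t / m) ≤ t / m - 1 := Real.log_le_sub_one_of_pos (by positivity)
    rw [Real.log_div (ne_of_gt h) (ne_of_gt hm0)] at hlog
    have key : (m:ℝ) * Real.log t - t ≤ (m:ℝ) * Real.log m - m := by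
      have h1 := mul_le_mul_of_nonneg_left hlog (le_of_lt hm0)
      have h2 : (m:ℝ) * (t / m - 1) = t - m := by field_simp
      nlinarith
    have e1 : t ^ m * Real.exp (-t) = Real.exp ((m:ℝ) * Real.log t - t) := by
      rw [Real.exp_sub, Real.exp_nat_mul, Real.exp_log h, Real.exp_neg, div_eq_mul_inv]
    have e2 : (m:ℝ) ^ m * Real.exp (-(m:ℝ)) = Real.exp ((m:ℝ) * Real.log m - m) := by
      rw [Real.exp_sub, Real.exp_nat_mul, Real.exp_log hm0, Real.exp_neg, div_eq_mul_inv]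
    rw [e1, e2]
    exact Real.exp_le_exp.2 key

lemma aux2 (m : ℕ) (hm : 1 ≤ m) {x : ℝ} (hx : 0 ≤ x) {k : ℕ} (hk : 1 ≤ k) :
    x ^ m * Real.exp (-((k:ℝ) * x)) ≤ ((m:ℝ) ^ m * Real.exp (-(m:ℝ))) * (k:ℝ) ^ (-(m:ℝ)) := by
  have hk0 : (0:ℝ) < k := by exact_mod_cast hk
  have h1 := aux1 m hm (t := (k:ℝ) * x) (by positivity)
  have hrp : (k:ℝ) ^ (-(m:ℝ)) = ((k:ℝ) ^ m)⁻¹ := by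
    rw [← Real.rpow_natCast (k:ℝ) m, ← Real.rpow_neg (le_of_lt hk0)]
  have hkm : (0:ℝ) < (k:ℝ) ^ m := by positivity
  rw [hrp, ← div_eq_mul_inv, le_div_iff₀ hkm]
  rw [mul_pow] at h1
  calc x ^ m * Real.exp (-((k:ℝ) * x)) * (k:ℝ) ^ m
      = (k:ℝ) ^ m * x ^ m * Real.exp (-((k:ℝ) * x)) := by ring
    _ ≤ _ := h1

lemma aux3 {s : ℝ} (hs : 1 < s) {a : ℝ} (ha : 1 ≤ a) :
    (s - 1) * (a + 1) ^ (-s) ≤ a ^ (1 - s) - (a + 1) ^ (1 - s) := by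
  have ha0 : (0:ℝ) < a := lt_of_lt_of_le one_pos ha
  obtain ⟨c, hc, hslope⟩ := exists_hasDerivAt_eq_slope (fun x => x ^ (1 - s))
    (fun x => (1 - s) * x ^ (-s)) (by linarith : a < a + 1)
    (by
      intro x hx
      have hx0 : x ≠ 0 := by
        have h1 := hx.1; intro h; rw [h] at h1; linarith
      exact (Real.continuousAt_rpow_const x (1 - s) (Or.inl hx0)).continuousWithinAt)
    (by
      intro x hx
      have hx0 : x ≠ 0 := by intro h; rw [h] at hx; exact absurd hx.1 (by linarith)
      have hd := Real.hasDerivAt_rpow_const (x := x) (p := 1 - s) (Or.inl hx0)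
      have h2 : 1 - s - 1 = -s := by ring
      rw [h2] at hd
      exact hd)
  have hc1 : c ≤ a + 1 := le_of_lt hc.2
  have hc0 : 0 < c := lt_trans ha0 hc.1
  have hmono : (a + 1) ^ (-s) ≤ c ^ (-s) :=
    Real.rpow_le_rpow_of_nonpos hc0 hc1 (by linarith)
  have hslope' : (1 - s) * c ^ (-s) = (a+1) ^ (1-s) - a ^ (1-s) := by
    rw [hslope]; simp
  nlinarith [hmono, hslope']

lemma aux4 {s : ℝ} (hs : 1 < s) {J : ℕ} (hJ : 1 ≤ J) (N : ℕ) :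
    ∑ n ∈ Finset.Ioc J N, (n:ℝ) ^ (-s) ≤ (J:ℝ) ^ (1 - s) / (s - 1) := by
  have hs0 : (0:ℝ) < s - 1 := by linarith
  rcases le_or_gt N J with h | h
  · rw [Finset.Ioc_eq_empty (by omega), Finset.sum_empty]
    positivity
  · have key : ∀ N, J ≤ N → ∑ n ∈ Finset.Ioc J N, (n:ℝ) ^ (-s)
        ≤ ((J:ℝ) ^ (1 - s) - (N:ℝ) ^ (1 - s)) / (s - 1) := by
      intro N
      induction N with
      | zero => omega
      | succ N ih =>
        intro hJN
        rcases le_or_gt J N with hJN' | hJN'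
        · rw [Finset.sum_Ioc_succ_top hJN']
          have h3 := aux3 hs (a := (N:ℝ)) (by exact_mod_cast le_trans hJ hJN')
          have hcast : ((N:ℝ) + 1) = ((N+1 : ℕ) : ℝ) := by push_cast; ring
          rw [hcast] at h3
          have := ih hJN'
          have hstep : ((N+1:ℕ):ℝ) ^ (-s) ≤ ((N:ℝ) ^ (1-s) - ((N+1:ℕ):ℝ) ^ (1-s)) / (s-1) := by
            rw [le_div_iff₀ hs0]; linarith
          calc ∑ n ∈ Finset.Ioc J N, (n:ℝ) ^ (-s) + ((N+1:ℕ):ℝ) ^ (-s)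
              ≤ ((J:ℝ) ^ (1-s) - (N:ℝ) ^ (1-s)) / (s-1)
                + ((N:ℝ) ^ (1-s) - ((N+1:ℕ):ℝ) ^ (1-s)) / (s-1) := by
                exact add_le_add this hstep
            _ = ((J:ℝ) ^ (1-s) - ((N+1:ℕ):ℝ) ^ (1-s)) / (s-1) := by ring
        · have : J = N + 1 := by omega
          subst this
          simp
    have h2 := key N (le_of_lt h)
    have hN0 : (0:ℝ) ≤ (N:ℝ) ^ (1 - s) := Real.rpow_nonneg (by positivity) _
    calc ∑ n ∈ Finset.Ioc J N, (n:ℝ) ^ (-s) ≤ ((J:ℝ) ^ (1-s) - (N:ℝ) ^ (1-s)) / (s-1) := h2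
      _ ≤ (J:ℝ) ^ (1-s) / (s-1) := by gcongr; linarith

lemma est (p : ℕ+ → ℝ) (hp0 : ∀ j, 0 ≤ p j) (hp1 : ∀ j, p j ≤ 1) (hps : Summable p)
    (α : ℝ) (hα0 : 0 < α) (hα1 : α < 1) (m : ℕ) (hm : 1 ≤ m)
    (ε : ℝ) (hε : 0 ≤ ε) (J : ℕ) (hJ : 1 ≤ J)
    (htail : ∀ j : ℕ+, J < (j:ℕ) → p j ≤ ε * (j:ℝ) ^ (-(1/α)))
    (k : ℕ) (hk : 1 ≤ k) :
    (∑' j : ℕ+, p j ^ m * (1 - p j) ^ k) ≤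
      (J:ℝ) * (((m:ℝ) ^ m * Real.exp (-(m:ℝ))) * (k:ℝ) ^ (-(m:ℝ)))
        + ε ^ m * ((J:ℝ) ^ (1 - (m:ℝ)/α) / ((m:ℝ)/α - 1)) := by
  set s : ℝ := (m:ℝ)/α with hs_def
  have hm1 : (1:ℝ) ≤ (m:ℝ) := by exact_mod_cast hm
  have hs1 : 1 < s := by
    rw [hs_def, lt_div_iff₀ hα0]; nlinarith
  set f : ℕ+ → ℝ := fun j => p j ^ m * (1 - p j) ^ k with hf_def
  have hf0 : ∀ j, 0 ≤ f j := fun j => by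
    apply mul_nonneg (pow_nonneg (hp0 j) m) (pow_nonneg (by linarith [hp1 j]) k)
  have hfle : ∀ j, f j ≤ p j := fun j => by
    calc f j ≤ p j ^ m * 1 := by
          apply mul_le_mul_of_nonneg_left _ (pow_nonneg (hp0 j) m)
          exact pow_le_one₀ (by linarith [hp1 j]) (by linarith [hp0 j])
      _ = p j ^ m := mul_one _
      _ ≤ p j := pow_le_of_le_one (hp0 j) (hp1 j) (by omega)
  have hfs : Summable f := Summable.of_nonneg_of_le hf0 hfle hps
  apply Summable.tsum_le_of_sum_le hfs
  intro F
  classical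
  rw [← Finset.sum_filter_add_sum_filter_not F (fun j : ℕ+ => (j:ℕ) ≤ J)]
  set F1 := F.filter (fun j : ℕ+ => (j:ℕ) ≤ J) with hF1
  set F2 := F.filter (fun j : ℕ+ => ¬ (j:ℕ) ≤ J) with hF2
  have Hc := ((m:ℝ) ^ m * Real.exp (-(m:ℝ))) * (k:ℝ) ^ (-(m:ℝ))
  -- head bound
  have head : ∑ j ∈ F1, f j ≤ (J:ℝ) * (((m:ℝ) ^ m * Real.exp (-(m:ℝ))) * (k:ℝ) ^ (-(m:ℝ))) := by
    have hterm : ∀ j ∈ F1, f j ≤ ((m:ℝ) ^ m * Real.exp (-(m:ℝ))) * (k:ℝ) ^ (-(m:ℝ)) := by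
      intro j _
      have h1 : (1 - p j) ^ k ≤ Real.exp (-((k:ℝ) * p j)) := by
        have := Real.add_one_le_exp (-(p j))
        calc (1 - p j) ^ k ≤ Real.exp (-(p j)) ^ k := by
              apply pow_le_pow_left₀ (by linarith [hp1 j]) (by linarith)
          _ = Real.exp (-((k:ℝ) * p j)) := by
              rw [← Real.exp_nat_mul]; ring_nf
      calc f j ≤ p j ^ m * Real.exp (-((k:ℝ) * p j)) :=
            mul_le_mul_of_nonneg_left h1 (pow_nonneg (hp0 j) m)
        _ ≤ _ := aux2 m hm (hp0 j) hk
    have hcard : F1.card ≤ J := by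
      have : ∀ j ∈ F1, (j:ℕ) ∈ Finset.Icc 1 J := by
        intro j hj
        rw [hF1, Finset.mem_filter] at hj
        exact Finset.mem_Icc.2 ⟨j.2, hj.2⟩
      calc F1.card ≤ (Finset.Icc 1 J).card :=
            Finset.card_le_card_of_injOn (fun j : ℕ+ => (j:ℕ)) this
              (fun a _ b _ h => PNat.coe_injective h)
        _ = J := by rw [Nat.card_Icc]; omega
    calc ∑ j ∈ F1, f j ≤ F1.card • (((m:ℝ) ^ m * Real.exp (-(m:ℝ))) * (k:ℝ) ^ (-(m:ℝ))) :=
          Finset.sum_le_card_nsmul _ _ _ hterm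
      _ = (F1.card : ℝ) * _ := by rw [nsmul_eq_mul]
      _ ≤ (J:ℝ) * _ := by
          apply mul_le_mul_of_nonneg_right (by exact_mod_cast hcard)
          positivity
  -- tail bound
  have tail : ∑ j ∈ F2, f j ≤ ε ^ m * ((J:ℝ) ^ (1 - s) / (s - 1)) := by
    have hterm : ∀ j ∈ F2, f j ≤ ε ^ m * ((j:ℕ):ℝ) ^ (-s) := by
      intro j hj
      rw [hF2, Finset.mem_filter] at hj
      have hjJ : J < (j:ℕ) := by omega
      have hpj := htail j hjJ
      have hj0 : (0:ℝ) < ((j:ℕ):ℝ) := by exact_mod_cast j.2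
      have h2 : p j ^ m ≤ (ε * ((j:ℕ):ℝ) ^ (-(1/α))) ^ m :=
        pow_le_pow_left₀ (hp0 j) hpj m
      have h3 : (ε * ((j:ℕ):ℝ) ^ (-(1/α))) ^ m = ε ^ m * ((j:ℕ):ℝ) ^ (-s) := by
        rw [mul_pow, ← Real.rpow_natCast (((j:ℕ):ℝ) ^ (-(1/α))) m,
          ← Real.rpow_mul (le_of_lt hj0)]
        congr 2
        rw [hs_def]; field_simp
      calc f j ≤ p j ^ m * 1 := by
            apply mul_le_mul_of_nonneg_left _ (pow_nonneg (hp0 j) m)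
            exact pow_le_one₀ (by linarith [hp1 j]) (by linarith [hp0 j])
        _ = p j ^ m := mul_one _
        _ ≤ ε ^ m * ((j:ℕ):ℝ) ^ (-s) := h3 ▸ h2
    set N : ℕ := F2.sup (fun j : ℕ+ => (j:ℕ)) with hN
    calc ∑ j ∈ F2, f j ≤ ∑ j ∈ F2, ε ^ m * ((j:ℕ):ℝ) ^ (-s) := Finset.sum_le_sum hterm
      _ = ε ^ m * ∑ j ∈ F2, ((j:ℕ):ℝ) ^ (-s) := by rw [Finset.mul_sum]
      _ ≤ ε ^ m * ∑ n ∈ Finset.Ioc J N, (n:ℝ) ^ (-s) := by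
          apply mul_le_mul_of_nonneg_left _ (pow_nonneg hε m)
          conv_lhs => rw [← Finset.sum_image (f := fun n : ℕ => (n:ℝ) ^ (-s))
            (g := fun j : ℕ+ => (j:ℕ)) (fun a _ b _ h => PNat.coe_injective h)]
          apply Finset.sum_le_sum_of_subset_of_nonneg
          · intro n hn
            rw [Finset.mem_image] at hn
            obtain ⟨j, hj, rfl⟩ := hn
            have hle := Finset.le_sup (f := fun j : ℕ+ => (j:ℕ)) hj
            rw [hF2, Finset.mem_filter] at hj
            exact Finset.mem_Ioc.2 ⟨by omega, hle⟩
          · intro n _ _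
            positivity
      _ ≤ ε ^ m * ((J:ℝ) ^ (1 - s) / (s - 1)) := by
          apply mul_le_mul_of_nonneg_left (aux4 hs1 hJ N) (pow_nonneg hε m)
  exact add_le_add head tail

/-- missing-mass moments. Let `p` be a nonincreasing pmf on the positive
integers with `p j ≤ M j^{−1/α}` for some `M > 0`, `α ∈ (0,1)`, and fix `m ≥ 1`. Then there is
`C > 0` with `∑_j p_j^m (1−p_j)^k ≤ C / k^{m−α}` for all `k ≥ 1`; and if moreover
`p_j = o(j^{−1/α})` then `∑_j p_j^m (1−p_j)^k = o(k^{−(m−α)})` as `k → ∞`. -/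
theorem missing_mass_moment_bound (p : ℕ+ → ℝ)
    (hp0 : ∀ j, 0 ≤ p j) (hsum : ∑' j, p j = 1) (hmono : Antitone p)
    (M α : ℝ) (hM : 0 < M) (hα : α ∈ Set.Ioo (0 : ℝ) 1)
    (hbound : ∀ j : ℕ+, p j ≤ M * (j : ℝ) ^ (-(1 / α)))
    (m : ℕ) (hm : 1 ≤ m) :
    (∃ C > 0, ∀ k : ℕ, 1 ≤ k →
        (∑' j : ℕ+, p j ^ m * (1 - p j) ^ k) ≤ C / (k : ℝ) ^ ((m : ℝ) - α)) ∧
    (((fun j : ℕ+ => p j) =o[atTop] fun j : ℕ+ => (j : ℝ) ^ (-(1 / α))) →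
      (fun k : ℕ => ∑' j : ℕ+, p j ^ m * (1 - p j) ^ k)
        =o[atTop] fun k : ℕ => (k : ℝ) ^ (-((m : ℝ) - α))) := by
  obtain ⟨hα0, hα1⟩ := hα
  have hps : Summable p := by
    by_contra h
    rw [tsum_eq_zero_of_not_summable h] at hsum
    norm_num at hsum
  have hp1 : ∀ j, p j ≤ 1 := by
    intro j
    calc p j ≤ ∑' i, p i := Summable.le_tsum hps j (fun i _ => hp0 i)
      _ = 1 := hsum
  set Hc : ℝ := (m:ℝ) ^ m * Real.exp (-(m:ℝ)) with hHc_def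
  have hm1 : (1:ℝ) ≤ (m:ℝ) := by exact_mod_cast hm
  have hHc : 0 < Hc := by positivity
  set s : ℝ := (m:ℝ) / α with hs_def
  have hs1 : 1 < s := by rw [hs_def, lt_div_iff₀ hα0]; nlinarith
  have hαs : α * (1 - s) = α - m := by
    rw [hs_def]; field_simp
  -- generic consequence of est
  have key : ∀ (ε : ℝ), 0 ≤ ε → ∀ (δ : ℝ), 0 < δ → ∀ (k : ℕ), 1 ≤ k → 1 ≤ δ * (k:ℝ) ^ α →
      (∀ j : ℕ+, (⌈δ * (k:ℝ)^α⌉₊ : ℕ) < (j:ℕ) → p j ≤ ε * (j:ℝ) ^ (-(1/α))) →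
      (∑' j : ℕ+, p j ^ m * (1 - p j) ^ k) ≤
        (2 * δ * Hc + ε ^ m * (δ ^ (1 - s) / (s - 1))) * (k:ℝ) ^ (α - (m:ℝ)) := by
    intro ε hε δ hδ k hk hδk htail
    have hk0 : (0:ℝ) < (k:ℝ) := by exact_mod_cast hk
    have hkα : (0:ℝ) < (k:ℝ) ^ α := Real.rpow_pos_of_pos hk0 α
    set J : ℕ := ⌈δ * (k:ℝ)^α⌉₊ with hJ_def
    have hJ1 : 1 ≤ J := Nat.one_le_ceil_iff.2 (by positivity)
    have hJge : δ * (k:ℝ)^α ≤ (J:ℝ) := Nat.le_ceil _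
    have hJle : (J:ℝ) ≤ 2 * (δ * (k:ℝ)^α) := by
      have := Nat.ceil_lt_add_one (a := δ * (k:ℝ)^α) (by positivity)
      calc (J:ℝ) ≤ δ * (k:ℝ)^α + 1 := le_of_lt this
        _ ≤ 2 * (δ * (k:ℝ)^α) := by linarith
    have h1 := est p hp0 hp1 hps α hα0 hα1 m hm ε hε J hJ1 htail k hk
    rw [← hs_def] at h1
    -- head term
    have hhead : (J:ℝ) * (Hc * (k:ℝ) ^ (-(m:ℝ))) ≤ 2 * δ * Hc * (k:ℝ) ^ (α - (m:ℝ)) := by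
      have hrw : (k:ℝ) ^ (α - (m:ℝ)) = (k:ℝ)^α * (k:ℝ) ^ (-(m:ℝ)) := by
        rw [← Real.rpow_add hk0]; ring_nf
      rw [hrw]
      have hkm : (0:ℝ) < (k:ℝ) ^ (-(m:ℝ)) := Real.rpow_pos_of_pos hk0 _
      calc (J:ℝ) * (Hc * (k:ℝ) ^ (-(m:ℝ))) ≤ 2 * (δ * (k:ℝ)^α) * (Hc * (k:ℝ) ^ (-(m:ℝ))) := by
            apply mul_le_mul_of_nonneg_right hJle (by positivity)
        _ = 2 * δ * Hc * ((k:ℝ)^α * (k:ℝ) ^ (-(m:ℝ))) := by ring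
    -- tail term
    have htail2 : ε ^ m * ((J:ℝ) ^ (1 - s) / (s - 1)) ≤
        ε ^ m * (δ ^ (1 - s) / (s - 1)) * (k:ℝ) ^ (α - (m:ℝ)) := by
      have hJpow : (J:ℝ) ^ (1 - s) ≤ (δ * (k:ℝ)^α) ^ (1 - s) :=
        Real.rpow_le_rpow_of_nonpos (by positivity) hJge (by linarith)
      have heq : (δ * (k:ℝ)^α) ^ (1 - s) = δ ^ (1 - s) * (k:ℝ) ^ (α - (m:ℝ)) := by
        rw [Real.mul_rpow hδ.le hkα.le, ← Real.rpow_mul hk0.le, hαs]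
      calc ε ^ m * ((J:ℝ) ^ (1 - s) / (s - 1))
          ≤ ε ^ m * ((δ * (k:ℝ)^α) ^ (1 - s) / (s - 1)) := by
            apply mul_le_mul_of_nonneg_left _ (pow_nonneg hε m)
            apply div_le_div_of_nonneg_right hJpow (by linarith) |>.trans_eq rfl
        _ = ε ^ m * (δ ^ (1 - s) / (s - 1)) * (k:ℝ) ^ (α - (m:ℝ)) := by
            rw [heq]; ring
    calc (∑' j : ℕ+, p j ^ m * (1 - p j) ^ k)
        ≤ (J:ℝ) * (Hc * (k:ℝ) ^ (-(m:ℝ))) + ε ^ m * ((J:ℝ) ^ (1 - s) / (s - 1)) := h1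
      _ ≤ 2 * δ * Hc * (k:ℝ) ^ (α - (m:ℝ))
          + ε ^ m * (δ ^ (1 - s) / (s - 1)) * (k:ℝ) ^ (α - (m:ℝ)) := add_le_add hhead htail2
      _ = (2 * δ * Hc + ε ^ m * (δ ^ (1 - s) / (s - 1))) * (k:ℝ) ^ (α - (m:ℝ)) := by ring
  constructor
  · -- Part 1
    refine ⟨2 * Hc + M ^ m * (1 / (s - 1)), ?_, ?_⟩
    · have h1 : 0 < M ^ m * (1 / (s - 1)) :=
        mul_pos (pow_pos hM m) (one_div_pos.2 (by linarith))
      linarith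
    intro k hk
    have hk0 : (0:ℝ) < (k:ℝ) := by exact_mod_cast hk
    have hkα : (1:ℝ) ≤ (k:ℝ) ^ α := Real.one_le_rpow (by exact_mod_cast hk) (le_of_lt hα0)
    have h2 := key M (le_of_lt hM) 1 one_pos k hk (by rw [one_mul]; exact hkα)
      (fun j _ => hbound j)
    have hδ1 : ((1:ℝ)) ^ (1 - s) = 1 := Real.one_rpow _
    rw [hδ1] at h2
    have hrw : (k:ℝ) ^ (α - (m:ℝ)) = ((k:ℝ) ^ ((m:ℝ) - α))⁻¹ := by
      rw [← Real.rpow_neg (le_of_lt hk0)]; ring_nf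
    calc (∑' j : ℕ+, p j ^ m * (1 - p j) ^ k)
        ≤ (2 * 1 * Hc + M ^ m * (1 * (1 / (s - 1)))) * (k:ℝ) ^ (α - (m:ℝ)) := by
          convert h2 using 2; ring
      _ = (2 * Hc + M ^ m * (1 / (s - 1))) * ((k:ℝ) ^ ((m:ℝ) - α))⁻¹ := by rw [hrw]; ring
      _ = (2 * Hc + M ^ m * (1 / (s - 1))) / (k:ℝ) ^ ((m:ℝ) - α) := by
          rw [div_eq_mul_inv]; ring
  · -- Part 2
    intro h
    rw [isLittleO_iff]
    intro c hc
    set δ : ℝ := c / (4 * Hc) with hδ_def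
    have hδ : 0 < δ := by positivity
    set B : ℝ := δ ^ (1 - s) / (s - 1) with hB_def
    have hB : 0 < B := by
      apply div_pos (Real.rpow_pos_of_pos hδ _) (by linarith)
    set ε : ℝ := min 1 (c / (2 * B)) with hε_def
    have hε : 0 < ε := lt_min one_pos (by positivity)
    have hεm : ε ^ m * B ≤ c / 2 := by
      have h1 : ε ^ m ≤ ε := by
        calc ε ^ m ≤ ε ^ 1 := pow_le_pow_of_le_one (le_of_lt hε) (min_le_left _ _) hm
          _ = ε := pow_one ε
      calc ε ^ m * B ≤ ε * B := mul_le_mul_of_nonneg_right h1 (le_of_lt hB)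
        _ ≤ (c / (2 * B)) * B := mul_le_mul_of_nonneg_right (min_le_right _ _) (le_of_lt hB)
        _ = c / 2 := by field_simp
    obtain ⟨J0, hJ0⟩ := eventually_atTop.1 (isLittleO_iff.1 h hε)
    have htend : Tendsto (fun k : ℕ => δ * (k:ℝ) ^ α) atTop atTop :=
      Tendsto.const_mul_atTop hδ ((tendsto_rpow_atTop hα0).comp tendsto_natCast_atTop_atTop)
    filter_upwards [htend.eventually_ge_atTop (max 1 ((J0:ℕ):ℝ)), eventually_ge_atTop 1]
      with k hkδ hk
    have hk0 : (0:ℝ) < (k:ℝ) := by exact_mod_cast hk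
    have hδk1 : 1 ≤ δ * (k:ℝ) ^ α := le_trans (le_max_left _ _) hkδ
    have htail : ∀ j : ℕ+, (⌈δ * (k:ℝ)^α⌉₊ : ℕ) < (j:ℕ) → p j ≤ ε * (j:ℝ) ^ (-(1/α)) := by
      intro j hj
      have hJ0j : J0 ≤ j := by
        have h1 : ((J0:ℕ):ℝ) ≤ δ * (k:ℝ)^α := le_trans (le_max_right _ _) hkδ
        have h2 : δ * (k:ℝ)^α ≤ (⌈δ * (k:ℝ)^α⌉₊ : ℝ) := Nat.le_ceil _
        have h3 : (J0:ℕ) ≤ ⌈δ * (k:ℝ)^α⌉₊ := by exact_mod_cast le_trans h1 h2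
        have : (J0:ℕ) ≤ (j:ℕ) := by omega
        exact_mod_cast this
      have h4 := hJ0 j hJ0j
      rw [Real.norm_eq_abs, Real.norm_eq_abs] at h4
      have h5 : |(j:ℝ) ^ (-(1/α))| = (j:ℝ) ^ (-(1/α)) :=
        abs_of_nonneg (Real.rpow_nonneg (by positivity) _)
      rw [h5] at h4
      exact le_trans (le_abs_self _) h4
    have h6 := key ε (le_of_lt hε) δ hδ k hk hδk1 htail
    have hS0 : 0 ≤ ∑' j : ℕ+, p j ^ m * (1 - p j) ^ k := by
      apply tsum_nonneg
      intro j
      exact mul_nonneg (pow_nonneg (hp0 j) m) (pow_nonneg (by linarith [hp1 j]) k)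
    rw [Real.norm_eq_abs, Real.norm_eq_abs, abs_of_nonneg hS0,
      abs_of_nonneg (Real.rpow_nonneg (by positivity) _)]
    have hexp : -((m:ℝ) - α) = α - (m:ℝ) := by ring
    rw [hexp]
    have hconst : 2 * δ * Hc + ε ^ m * B ≤ c := by
      have : 2 * δ * Hc = c / 2 := by rw [hδ_def]; field_simp; ring
      linarith
    calc (∑' j : ℕ+, p j ^ m * (1 - p j) ^ k)
        ≤ (2 * δ * Hc + ε ^ m * B) * (k:ℝ) ^ (α - (m:ℝ)) := h6
      _ ≤ c * (k:ℝ) ^ (α - (m:ℝ)) := by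
          apply mul_le_mul_of_nonneg_right hconst (Real.rpow_nonneg hk0.le _)
end
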